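/- arXiv:1906.11071 — 3 statements merged into one kernel-verified Lean document; each statement's English description precedes it below -/
import Mathlib

section
/- Let (X, 𝒮, μ) be a finite measure space and let g : X → X be an injective bimeasurable transformation satisfying Condition (*). Then the composition operator T_g : L^p(μ) → L^p(μ) is topologically mixing if and only if for each ε > 0 there exist an integer k_0 ≥ 1 and measurable sets {B_k}_{k=k_0}^∞ such that μ(X \ B_k) < ε and B_k ∩ g^k(B_k) = ∅ for every k ≥ k_0. -/
open MeasureTheory Filter Set Topology ENNReal NNReal

noncomputable section

/-- The odometer (the "+1" map, with carry over to the right) on `Π i, Fin (α i)`. -/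
def odometer (α : ℕ → ℕ) (x : ∀ i, Fin (α i)) : ∀ i, Fin (α i) :=
  fun i =>
    if ∀ j < i, ((x j : ℕ) + 1 = α j)
    then ⟨((x i : ℕ) + 1) % α i, Nat.mod_lt _ (x i).pos⟩
    else x i

/-- Topological transitivity of a self-map of a topological space. -/
def TopTransitive {X : Type*} [TopologicalSpace X] (T : X → X) : Prop :=
  ∀ U V : Set X, IsOpen U → IsOpen V → U.Nonempty → V.Nonempty →
    ∃ k : ℕ, 1 ≤ k ∧ (T^[k] '' U ∩ V).Nonempty

/-- Topological mixing of a self-map of a topological space. -/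
def TopMixing {X : Type*} [TopologicalSpace X] (T : X → X) : Prop :=
  ∀ U V : Set X, IsOpen U → IsOpen V → U.Nonempty → V.Nonempty →
    ∃ k₀ : ℕ, 1 ≤ k₀ ∧ ∀ k ≥ k₀, (T^[k] '' U ∩ V).Nonempty

/-- `μ` is the product of the probability measures on the coordinates `Fin (α i)` given by
the weights `w i`: every basic cylinder has measure the product of the weights. -/
def IsProductMeasure (α : ℕ → ℕ) (w : ∀ i, Fin (α i) → NNReal)
    (μ : Measure (∀ i, Fin (α i))) : Prop :=
  ∀ (n : ℕ) (a : ∀ i : Fin n, Fin (α i.1)),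
    μ {x | ∀ i : Fin n, x i.1 = a i} = ∏ i : Fin n, (w i.1 (a i) : ENNReal)

/-- Condition (*): there is `c > 0` with `μ B ≥ c • μ (g ⁻¹ B)` for all measurable `B`. -/
def CondStar {X : Type*} [MeasurableSpace X] (μ : Measure X) (g : X → X) : Prop :=
  ∃ c : ℝ, 0 < c ∧ ∀ B : Set X, MeasurableSet B →
    ENNReal.ofReal c * μ (g ⁻¹' B) ≤ μ B


namespace BDPaux

variable {X : Type*} [MeasurableSpace X]

lemma comp_ae_eq {μ : Measure X} {G : X → X}
    (hnull : ∀ B : Set X, MeasurableSet B → μ B = 0 → μ (G ⁻¹' B) = 0)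
    {f h : X → ℝ} (hfh : f =ᵐ[μ] h) : f ∘ G =ᵐ[μ] h ∘ G := by
  rw [EventuallyEq, ae_iff] at hfh ⊢
  obtain ⟨N, hNsub, hNm, hN0⟩ := exists_measurable_superset_of_null hfh
  have hsub : {a | ¬(f ∘ G) a = (h ∘ G) a} ⊆ G ⁻¹' N := fun x hx => hNsub hx
  exact measure_mono_null hsub (hnull N hNm hN0)

lemma iterate_im (g : X → X) (hg : ∀ B : Set X, MeasurableSet B → MeasurableSet (g '' B)) :
    ∀ (k : ℕ) (B : Set X), MeasurableSet B → MeasurableSet (g^[k] '' B) := by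
  intro k
  induction k with
  | zero => simpa using fun B hB => hB
  | succ n ih =>
    intro B hB
    rw [Function.iterate_succ', Set.image_comp]
    exact hg _ (ih B hB)

lemma iterate_null {μ : Measure X} (g : X → X) (hgm : Measurable g)
    (hnull : ∀ B : Set X, MeasurableSet B → μ B = 0 → μ (g ⁻¹' B) = 0) :
    ∀ (k : ℕ) (B : Set X), MeasurableSet B → μ B = 0 → μ (g^[k] ⁻¹' B) = 0 := by
  intro k
  induction k with
  | zero => simp
  | succ n ih =>
    intro B hB h0
    rw [Function.iterate_succ, Set.preimage_comp]
    exact hnull _ ((hgm.iterate n) hB) (ih B hB h0)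

/-- The helper function realizing `s ∘ G⁻¹` on `G '' Bk`. -/
lemma exists_v (G : X → X) (hGinj : Function.Injective G)
    (hGim : ∀ B : Set X, MeasurableSet B → MeasurableSet (G '' B))
    {Bk : Set X} (hBk : MeasurableSet Bk) (s : X → ℝ) (hs : Measurable s) :
    ∃ v : X → ℝ, Measurable v ∧ (∀ x ∈ Bk, v (G x) = s x) ∧
      (∀ x, (∃ y, v x = s y) ∨ v x = 0) := by
  classical
  refine ⟨fun x => if h : ∃ y ∈ Bk, G y = x then s h.choose else 0, ?_, ?_, ?_⟩
  · intro A hA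
    have key : (fun x => if h : ∃ y ∈ Bk, G y = x then s h.choose else 0) ⁻¹' A
        = (G '' (Bk ∩ s ⁻¹' A)) ∪ ((G '' Bk)ᶜ ∩ (if (0:ℝ) ∈ A then univ else ∅)) := by
      ext x
      by_cases h : ∃ y ∈ Bk, G y = x
      · have hc := h.choose_spec
        have hxim : x ∈ G '' Bk := ⟨h.choose, hc.1, hc.2⟩
        simp only [mem_preimage, dif_pos h, mem_union, mem_inter_iff, mem_compl_iff]
        constructor
        · intro hA'; exact Or.inl ⟨h.choose, ⟨hc.1, hA'⟩, hc.2⟩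
        · rintro (⟨y, ⟨hyB, hyA⟩, hyx⟩ | ⟨hni, _⟩)
          · have : y = h.choose := hGinj (hyx.trans hc.2.symm)
            rwa [← this]
          · exact absurd hxim hni
      · have hxim : x ∉ G '' Bk := by
          rintro ⟨y, hyB, hyx⟩; exact h ⟨y, hyB, hyx⟩
        simp only [mem_preimage, dif_neg h, mem_union, mem_inter_iff, mem_compl_iff]
        constructor
        · intro h0
          refine Or.inr ⟨hxim, ?_⟩
          rw [if_pos h0]; trivial
        · rintro (⟨y, ⟨hyB, hyA⟩, hyx⟩ | ⟨_, hmem⟩)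
          · exact absurd ⟨y, hyB, hyx⟩ hxim
          · by_cases h0 : (0:ℝ) ∈ A
            · exact h0
            · rw [if_neg h0] at hmem; exact absurd hmem (notMem_empty x)
    rw [key]
    refine (hGim _ (hBk.inter (hs hA))).union (((hGim _ hBk).compl).inter ?_)
    split_ifs
    · exact MeasurableSet.univ
    · exact MeasurableSet.empty
  · intro x hx
    have h : ∃ y ∈ Bk, G y = G x := ⟨x, hx, rfl⟩
    have hc := h.choose_spec
    have : h.choose = x := hGinj hc.2
    simp only [dif_pos h, this]
  · intro x
    by_cases h : ∃ y ∈ Bk, G y = x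
    · exact Or.inl ⟨h.choose, by simp [dif_pos h]⟩
    · exact Or.inr (by simp [dif_neg h])

end BDPaux

open BDPaux

/-- Mixing characterization for composition operators on a finite measure space
(Theorem of Bayart–Darji–Pires). -/
theorem compositionOperator_mixing_iff
    {X : Type*} [MeasurableSpace X]
    (μ : Measure X) [IsFiniteMeasure μ]
    (g : X → X) (hg_inj : Function.Injective g) (hg_meas : Measurable g)
    (hg_bimeas : ∀ B : Set X, MeasurableSet B → MeasurableSet (g '' B))
    (hstar : CondStar μ g)
    (p : ENNReal) [Fact (1 ≤ p)] (hp' : p ≠ ⊤)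
    (T : Lp ℝ p μ →L[ℝ] Lp ℝ p μ)
    (hT : ∀ φ : Lp ℝ p μ, ⇑(T φ) =ᵐ[μ] (⇑φ ∘ g)) :
    TopMixing ⇑T ↔
      ∀ ε : ℝ, 0 < ε → ∃ k₀ : ℕ, 1 ≤ k₀ ∧ ∃ B : ℕ → Set X,
        ∀ k, k₀ ≤ k → MeasurableSet (B k) ∧ μ (univ \ B k) < ENNReal.ofReal ε ∧
          B k ∩ g^[k] '' (B k) = ∅ := by
  classical
  have hp1 : (1 : ℝ≥0∞) ≤ p := Fact.out
  have hp0 : p ≠ 0 := fun h => by simp [h] at hp1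
  set r := p.toReal with hrdef
  have hr : 0 < r := ENNReal.toReal_pos hp0 hp'
  have h1r : 1 ≤ r := by
    have := ENNReal.toReal_mono hp' hp1
    simpa using this
  obtain ⟨c, hc, hcB⟩ := hstar
  have hnull : ∀ B : Set X, MeasurableSet B → μ B = 0 → μ (g ⁻¹' B) = 0 := by
    intro B hB h0
    have h1 := hcB B hB
    rw [h0, le_zero_iff, mul_eq_zero] at h1
    rcases h1 with h1 | h1
    · exact absurd h1 (by simp [ENNReal.ofReal_eq_zero, not_le, hc])
    · exact h1
  have hTk : ∀ (k : ℕ) (φ : Lp ℝ p μ), ⇑((⇑T)^[k] φ) =ᵐ[μ] ⇑φ ∘ g^[k] := by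
    intro k
    induction k with
    | zero => intro φ; simp
    | succ n ih =>
      intro φ
      rw [Function.iterate_succ_apply']
      refine (hT _).trans ?_
      have h2 : ⇑((⇑T)^[n] φ) ∘ g =ᵐ[μ] (⇑φ ∘ g^[n]) ∘ g := comp_ae_eq hnull (ih φ)
      refine h2.trans ?_
      rw [Function.comp_assoc, ← Function.iterate_succ]
  constructor
  · -- mixing → condition
    intro hmix ε hε
    -- choose the radius δ
    set K : ℝ≥0∞ := 2 * 2 ^ r with hKdef
    have hK0 : K ≠ 0 := by
      simp only [hKdef, ne_eq, mul_eq_zero, not_or]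
      exact ⟨two_ne_zero, (ENNReal.rpow_pos two_pos ENNReal.ofNat_ne_top).ne'⟩
    have hKtop : K ≠ ⊤ := by
      simp only [hKdef, ne_eq, ENNReal.mul_eq_top, not_or]
      constructor
      · rintro ⟨-, h⟩
        exact (ENNReal.rpow_lt_top_of_nonneg hr.le ENNReal.ofNat_ne_top).ne h
      · rintro ⟨h, -⟩
        exact ENNReal.ofNat_ne_top h
    set η : ℝ≥0∞ := min 1 (ENNReal.ofReal (ε / 2) / K) with hηdef
    have hη1 : η ≤ 1 := min_le_left _ _
    have hηtop : η ≠ ⊤ := fun h => by simp [hηdef, min_eq_top] at h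
    have hηpos : 0 < η := by
      refine lt_min zero_lt_one (ENNReal.div_pos ?_ hKtop)
      simp [ENNReal.ofReal_eq_zero, not_le, half_pos hε]
    have hKη : K * η ^ r < ENNReal.ofReal ε := by
      have h1 : η ^ r ≤ η := by
        calc η ^ r ≤ η ^ (1 : ℝ) := ENNReal.rpow_le_rpow_of_exponent_ge hη1 h1r
        _ = η := ENNReal.rpow_one η
      calc K * η ^ r ≤ K * η := mul_le_mul_right h1 K
        _ ≤ K * (ENNReal.ofReal (ε / 2) / K) := mul_le_mul_right (min_le_right _ _) K
        _ = ENNReal.ofReal (ε / 2) := ENNReal.mul_div_cancel hK0 hKtop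
        _ < ENNReal.ofReal ε := by
          exact (ENNReal.ofReal_lt_ofReal_iff hε).2 (by linarith)
    set δ : ℝ := η.toReal with hδdef
    have hδpos : 0 < δ := ENNReal.toReal_pos hηpos.ne' hηtop
    have hηδ : ENNReal.ofReal δ = η := ENNReal.ofReal_toReal hηtop
    obtain ⟨k₀, hk₀, hmixk⟩ := hmix (Metric.ball (Lp.const p μ (1 : ℝ)) δ)
      (Metric.ball (Lp.const p μ (-1 : ℝ)) δ) Metric.isOpen_ball Metric.isOpen_ball
      ⟨_, Metric.mem_ball_self hδpos⟩ ⟨_, Metric.mem_ball_self hδpos⟩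
    refine ⟨k₀, hk₀, ?_⟩
    have key : ∀ k, k₀ ≤ k → ∃ Bk : Set X, MeasurableSet Bk ∧
        μ (univ \ Bk) < ENNReal.ofReal ε ∧ Bk ∩ g^[k] '' Bk = ∅ := by
      intro k hk
      obtain ⟨w, ⟨u, huU, hwu⟩, hwV⟩ := hmixk k hk
      set f : X → ℝ := ⇑u with hfdef
      have hfm : Measurable f := (Lp.stronglyMeasurable u).measurable
      -- first estimate
      have hd1 : ‖u - Lp.const p μ (1 : ℝ)‖ < δ := by
        rw [← dist_eq_norm]; exact huU
      have he1 : eLpNorm (fun x => f x - 1) p μ < ENNReal.ofReal δ := by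
        have hae : ⇑(u - Lp.const p μ (1 : ℝ)) =ᵐ[μ] fun x => f x - 1 := by
          filter_upwards [Lp.coeFn_sub u (Lp.const p μ (1 : ℝ)),
            Lp.coeFn_const (μ := μ) (p := p) (1:ℝ)] with x h1 h2
          rw [h1]
          simp only [Pi.sub_apply, h2, Function.const_apply]
          rfl
        rw [← eLpNorm_congr_ae hae]
        rw [Lp.norm_def] at hd1
        exact (ENNReal.lt_ofReal_iff_toReal_lt (Lp.eLpNorm_ne_top _)).2 hd1
      -- second estimate
      have hd2 : ‖(⇑T)^[k] u - Lp.const p μ (-1 : ℝ)‖ < δ := by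
        have h1 : dist ((⇑T)^[k] u) (Lp.const p μ (-1 : ℝ)) < δ := by
          rw [hwu]; exact Metric.mem_ball.1 hwV
        rw [← dist_eq_norm]; exact h1
      have he2 : eLpNorm (fun x => f (g^[k] x) - (-1)) p μ < ENNReal.ofReal δ := by
        have hae : ⇑((⇑T)^[k] u - Lp.const p μ (-1 : ℝ)) =ᵐ[μ]
            fun x => f (g^[k] x) - (-1) := by
          filter_upwards [Lp.coeFn_sub ((⇑T)^[k] u) (Lp.const p μ (-1 : ℝ)),
            Lp.coeFn_const (μ := μ) (p := p) (-1:ℝ), hTk k u] with x h1 h2 h3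
          rw [h1]
          simp only [Pi.sub_apply, h2, h3, Function.const_apply]
          rfl
        rw [← eLpNorm_congr_ae hae]
        rw [Lp.norm_def] at hd2
        exact (ENNReal.lt_ofReal_iff_toReal_lt (Lp.eLpNorm_ne_top _)).2 hd2
      -- Chebyshev
      have cheb : ∀ F : X → ℝ, Measurable F → eLpNorm F p μ < ENNReal.ofReal δ →
          μ {x | (2⁻¹ : ℝ≥0∞) ≤ ‖F x‖₊} ≤ 2 ^ r * η ^ r := by
        intro F hF hFe
        have h1 := meas_ge_le_mul_pow_eLpNorm_enorm μ hp0 hp' hF.aestronglyMeasurable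
          (ε := (2⁻¹ : ℝ≥0∞)) (by simp) (by simp)
        refine h1.trans ?_
        rw [inv_inv]
        refine mul_le_mul_right ?_ _
        rw [← hηδ]
        exact ENNReal.rpow_le_rpow hFe.le hr.le
      have hA1 := cheb _ (hfm.sub measurable_const) he1
      have hA2 := cheb _ (((hfm.comp (hg_meas.iterate k)).sub measurable_const)) he2
      -- the set B
      refine ⟨{x | |f x - 1| < 1/2} ∩ {x | |f (g^[k] x) - (-1)| < 1/2}, ?_, ?_, ?_⟩
      · exact (measurableSet_lt (hfm.sub measurable_const).abs measurable_const).inter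
          (measurableSet_lt ((hfm.comp (hg_meas.iterate k)).sub measurable_const).abs
            measurable_const)
      · have hconv : ∀ a : ℝ, ¬ |a| < 1/2 → (2⁻¹ : ℝ≥0∞) ≤ ‖a‖₊ := by
          intro a ha
          rw [not_lt] at ha
          rw [← enorm_eq_nnnorm, ← ofReal_norm, Real.norm_eq_abs]
          refine (ENNReal.le_ofReal_iff_toReal_le (by simp) (abs_nonneg a)).2 ?_
          simpa using ha
        have hsub : univ \ ({x | |f x - 1| < 1/2} ∩ {x | |f (g^[k] x) - (-1)| < 1/2}) ⊆
            {x | (2⁻¹ : ℝ≥0∞) ≤ ‖f x - 1‖₊} ∪ {x | (2⁻¹ : ℝ≥0∞) ≤ ‖f (g^[k] x) - (-1)‖₊} := by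
          intro x hx
          have h2 : ¬(|f x - 1| < 1/2 ∧ |f (g^[k] x) - (-1)| < 1/2) := by
            intro h; exact hx.2 ⟨h.1, h.2⟩
          rw [not_and_or] at h2
          rcases h2 with h2 | h2
          · exact Or.inl (hconv _ h2)
          · exact Or.inr (hconv _ h2)
        calc μ (univ \ _) ≤ μ ({x | (2⁻¹ : ℝ≥0∞) ≤ ‖f x - 1‖₊} ∪
              {x | (2⁻¹ : ℝ≥0∞) ≤ ‖f (g^[k] x) - (-1)‖₊}) := measure_mono hsub
          _ ≤ μ {x | (2⁻¹ : ℝ≥0∞) ≤ ‖f x - 1‖₊} +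
              μ {x | (2⁻¹ : ℝ≥0∞) ≤ ‖f (g^[k] x) - (-1)‖₊} := measure_union_le _ _
          _ ≤ 2 ^ r * η ^ r + 2 ^ r * η ^ r := add_le_add hA1 hA2
          _ = K * η ^ r := by rw [hKdef]; ring
          _ < ENNReal.ofReal ε := hKη
      · rw [Set.eq_empty_iff_forall_notMem]
        rintro x ⟨⟨hx1, -⟩, y, ⟨-, hy2⟩, hyx⟩
        simp only [mem_setOf_eq] at hx1 hy2
        rw [hyx] at hy2
        rw [abs_lt] at hx1 hy2
        linarith [hx1.1, hy2.2]
    refine ⟨fun k => if h : k₀ ≤ k then (key k h).choose else ∅, fun k hk => ?_⟩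
    simp only [dif_pos hk]
    exact (key k hk).choose_spec
  · -- condition → mixing
    intro hcond U V hU hV hUne hVne
    obtain ⟨φ₁, hφ₁⟩ := hUne
    obtain ⟨φ₂, hφ₂⟩ := hVne
    obtain ⟨δ₁, hδ₁pos, hδ₁⟩ := Metric.isOpen_iff.1 hU φ₁ hφ₁
    obtain ⟨δ₂, hδ₂pos, hδ₂⟩ := Metric.isOpen_iff.1 hV φ₂ hφ₂
    set δ : ℝ := min δ₁ δ₂ with hδdef
    have hδpos : 0 < δ := lt_min hδ₁pos hδ₂pos
    -- approximate by simple functions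
    have hd := Lp.simpleFunc.denseRange (E := ℝ) (p := p) (μ := μ) hp'
    obtain ⟨s₁, hs₁⟩ := hd.exists_dist_lt φ₁ (by positivity : (0:ℝ) < δ/2)
    obtain ⟨s₂, hs₂⟩ := hd.exists_dist_lt φ₂ (by positivity : (0:ℝ) < δ/2)
    set f₁ : SimpleFunc X ℝ := Lp.simpleFunc.toSimpleFunc s₁ with hf₁def
    set f₂ : SimpleFunc X ℝ := Lp.simpleFunc.toSimpleFunc s₂ with hf₂def
    have hf₁ae : ⇑f₁ =ᵐ[μ] ⇑(s₁ : Lp ℝ p μ) := Lp.simpleFunc.toSimpleFunc_eq_toFun s₁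
    have hf₂ae : ⇑f₂ =ᵐ[μ] ⇑(s₂ : Lp ℝ p μ) := Lp.simpleFunc.toSimpleFunc_eq_toFun s₂
    obtain ⟨M₁, hM₁⟩ := f₁.exists_forall_norm_le
    obtain ⟨M₂, hM₂⟩ := f₂.exists_forall_norm_le
    set M : ℝ := max (max M₁ M₂) 1 with hMdef
    have hM1 : (1:ℝ) ≤ M := le_max_right _ _
    have hM0 : (0:ℝ) < M := lt_of_lt_of_le one_pos hM1
    have hMf₁ : ∀ x, ‖f₁ x‖ ≤ M := fun x => (hM₁ x).trans ((le_max_left _ _).trans (le_max_left _ _))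
    have hMf₂ : ∀ x, ‖f₂ x‖ ≤ M := fun x => (hM₂ x).trans ((le_max_right _ _).trans (le_max_left _ _))
    -- choose ε'
    set K : ℝ≥0∞ := ENNReal.ofReal (2 * M) with hKdef
    have hK0 : K ≠ 0 := by simp [hKdef, ENNReal.ofReal_eq_zero, not_le]; positivity
    have hKtop : K ≠ ⊤ := ENNReal.ofReal_ne_top
    set ν : ℝ≥0∞ := min 1 (ENNReal.ofReal (δ/4) / K) with hνdef
    have hν1 : ν ≤ 1 := min_le_left _ _
    have hνtop : ν ≠ ⊤ := fun h => by simp [hνdef, min_eq_top] at h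
    have hνpos : 0 < ν := by
      refine lt_min zero_lt_one (ENNReal.div_pos ?_ hKtop)
      simp only [ne_eq, ENNReal.ofReal_eq_zero, not_le]
      positivity
    set η : ℝ≥0∞ := ν ^ r with hηdef
    have hηpos : 0 < η := ENNReal.rpow_pos hνpos hνtop
    have hηtop : η ≠ ⊤ := (ENNReal.rpow_lt_top_of_nonneg hr.le hνtop).ne
    set ε' : ℝ := η.toReal with hε'def
    have hε'pos : 0 < ε' := ENNReal.toReal_pos hηpos.ne' hηtop
    have hηε' : ENNReal.ofReal ε' = η := ENNReal.ofReal_toReal hηtop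
    -- the key estimate for sets of measure < η
    have hkey : ∀ S : Set X, μ S < η → K * μ S ^ (1/r) ≤ ENNReal.ofReal (δ/4) := by
      intro S hS
      have h1 : μ S ^ (1/r) ≤ ν := by
        calc μ S ^ (1/r) ≤ η ^ (1/r) := ENNReal.rpow_le_rpow hS.le (by positivity)
          _ = ν ^ (r * (1/r)) := by rw [hηdef, ← ENNReal.rpow_mul]
          _ = ν := by rw [mul_one_div_cancel hr.ne', ENNReal.rpow_one]
      calc K * μ S ^ (1/r) ≤ K * (ENNReal.ofReal (δ/4) / K) :=
            mul_le_mul_right (h1.trans (min_le_right _ _)) K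
        _ = ENNReal.ofReal (δ/4) := ENNReal.mul_div_cancel hK0 hKtop
    obtain ⟨k₀, hk₀1, B, hB⟩ := hcond ε' hε'pos
    refine ⟨k₀, hk₀1, fun k hk => ?_⟩
    obtain ⟨hBkm, hBkμ, hBkdisj⟩ := hB k hk
    rw [hηε'] at hBkμ
    set G : X → X := g^[k] with hGdef
    have hGinj : Function.Injective G := Function.Injective.iterate hg_inj k
    have hGmeas : Measurable G := hg_meas.iterate k
    have hGim : ∀ A : Set X, MeasurableSet A → MeasurableSet (G '' A) :=
      fun A hA => iterate_im g hg_bimeas k A hA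
    obtain ⟨v, hvmeas, hveq, hvval⟩ := exists_v G hGinj hGim hBkm (⇑f₂) f₂.measurable
    set u : X → ℝ := (B k).piecewise (⇑f₁) v with hudef
    have humeas : Measurable u := Measurable.piecewise hBkm f₁.measurable hvmeas
    have hubd : ∀ x, ‖u x‖ ≤ M := by
      intro x
      by_cases hx : x ∈ B k
      · rw [hudef, Set.piecewise_eq_of_mem _ _ _ hx]; exact hMf₁ x
      · rw [hudef, Set.piecewise_eq_of_notMem _ _ _ hx]
        rcases hvval x with ⟨y, hy⟩ | h0
        · rw [hy]; exact hMf₂ y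
        · rw [h0]; simpa using hM0.le
    have hmem : MemLp u p μ := MemLp.of_bound humeas.aestronglyMeasurable M (ae_of_all _ hubd)
    set w : Lp ℝ p μ := MemLp.toLp u hmem with hwdef
    have hw : ⇑w =ᵐ[μ] u := MemLp.coeFn_toLp hmem
    -- bound on eLpNorm of functions vanishing on B k and bounded by 2M
    have hbound : ∀ F : X → ℝ, (∀ x ∈ B k, F x = 0) → (∀ x, ‖F x‖ ≤ 2*M) →
        eLpNorm F p μ ≤ ENNReal.ofReal (δ/4) := by
      intro F hF0 hFbd
      have hmono : ∀ x, ‖F x‖ ≤ ‖(univ \ B k).indicator (fun _ => (2*M : ℝ)) x‖ := by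
        intro x
        by_cases hx : x ∈ B k
        · rw [hF0 x hx]; simp
        · rw [Set.indicator_of_mem ((Set.mem_diff _).mpr ⟨Set.mem_univ x, hx⟩)]
          exact (hFbd x).trans (le_abs_self _)
      calc eLpNorm F p μ ≤ eLpNorm ((univ \ B k).indicator (fun _ => (2*M : ℝ))) p μ :=
            eLpNorm_mono hmono
        _ ≤ ‖(2*M : ℝ)‖₊ * μ (univ \ B k) ^ (1/p.toReal) := eLpNorm_indicator_const_le _ _
        _ = K * μ (univ \ B k) ^ (1/r) := by
          rw [hKdef, ← Real.enorm_eq_ofReal (by positivity)]; rfl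
        _ ≤ ENNReal.ofReal (δ/4) := hkey _ hBkμ
    -- from eLpNorm bound to dist bound
    have hdist : ∀ (a : Lp ℝ p μ) (F : X → ℝ), (⇑a =ᵐ[μ] F) →
        eLpNorm F p μ ≤ ENNReal.ofReal (δ/4) → ‖a‖ < δ/2 := by
      intro a F hae hF
      rw [Lp.norm_def, eLpNorm_congr_ae hae]
      calc (eLpNorm F p μ).toReal ≤ (ENNReal.ofReal (δ/4)).toReal :=
            ENNReal.toReal_mono ENNReal.ofReal_ne_top hF
        _ = δ/4 := ENNReal.toReal_ofReal (by positivity)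
        _ < δ/2 := by linarith
    -- w is close to s₁
    have hwu1 : ‖w - (s₁ : Lp ℝ p μ)‖ < δ/2 := by
      refine hdist _ (fun x => u x - f₁ x) ?_ ?_
      · filter_upwards [Lp.coeFn_sub w (s₁ : Lp ℝ p μ), hw, hf₁ae] with x h1 h2 h3
        rw [h1]
        simp only [Pi.sub_apply, h2, ← h3]
      · refine hbound _ ?_ ?_
        · intro x hx
          rw [hudef, Set.piecewise_eq_of_mem _ _ _ hx, sub_self]
        · intro x
          calc ‖u x - f₁ x‖ ≤ ‖u x‖ + ‖f₁ x‖ := norm_sub_le _ _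
            _ ≤ M + M := add_le_add (hubd x) (hMf₁ x)
            _ = 2*M := by ring
    have hwU : w ∈ U := by
      refine hδ₁ ?_
      rw [Metric.mem_ball]
      have hcalc : dist w φ₁ < δ := by
        calc dist w φ₁ ≤ dist w (s₁ : Lp ℝ p μ) + dist (s₁ : Lp ℝ p μ) φ₁ := dist_triangle _ _ _
          _ < δ/2 + δ/2 := by
            refine add_lt_add ?_ ?_
            · rw [dist_eq_norm]; exact hwu1
            · rw [dist_comm]; exact hs₁
          _ = δ := by ring
      exact lt_of_lt_of_le hcalc (min_le_left δ₁ δ₂)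
    -- T^[k] w is close to s₂
    have hTkw : ⇑((⇑T)^[k] w) =ᵐ[μ] u ∘ G := by
      refine (hTk k w).trans ?_
      exact comp_ae_eq (fun A hA h0 => iterate_null g hg_meas hnull k A hA h0) hw
    have hGB : ∀ x ∈ B k, G x ∉ B k := by
      intro x hx hGx
      have : G x ∈ B k ∩ g^[k] '' (B k) := ⟨hGx, ⟨x, hx, rfl⟩⟩
      rw [hBkdisj] at this
      exact this
    have hwu2 : ‖(⇑T)^[k] w - (s₂ : Lp ℝ p μ)‖ < δ/2 := by
      refine hdist _ (fun x => u (G x) - f₂ x) ?_ ?_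
      · filter_upwards [Lp.coeFn_sub ((⇑T)^[k] w) (s₂ : Lp ℝ p μ), hTkw, hf₂ae] with x h1 h2 h3
        rw [h1]
        simp only [Pi.sub_apply, h2, ← h3]
        rfl
      · refine hbound _ ?_ ?_
        · intro x hx
          have h1 : u (G x) = v (G x) := by
            rw [hudef, Set.piecewise_eq_of_notMem _ _ _ (hGB x hx)]
          rw [h1, hveq x hx, sub_self]
        · intro x
          calc ‖u (G x) - f₂ x‖ ≤ ‖u (G x)‖ + ‖f₂ x‖ := norm_sub_le _ _
            _ ≤ M + M := add_le_add (hubd _) (hMf₂ x)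
            _ = 2*M := by ring
    have hwV : (⇑T)^[k] w ∈ V := by
      refine hδ₂ ?_
      rw [Metric.mem_ball]
      have hcalc : dist ((⇑T)^[k] w) φ₂ < δ := by
        calc dist ((⇑T)^[k] w) φ₂ ≤ dist ((⇑T)^[k] w) (s₂ : Lp ℝ p μ) +
              dist (s₂ : Lp ℝ p μ) φ₂ := dist_triangle _ _ _
          _ < δ/2 + δ/2 := by
            refine add_lt_add ?_ ?_
            · rw [dist_eq_norm]; exact hwu2
            · rw [dist_comm]; exact hs₂
          _ = δ := by ring
      exact lt_of_lt_of_le hcalc (min_le_right δ₁ δ₂)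
    exact ⟨(⇑T)^[k] w, ⟨w, hwU, rfl⟩, hwV⟩
end
end

section
/- Let (X, 𝒮, μ) be a finite measure space and let g : X → X be an injective bimeasurable transformation satisfying Condition (*). Then the composition operator T_g : L^p(μ) → L^p(μ) is topologically transitive if and only if for each ε > 0 there exist an integer k ≥ 1 and a measurable set B ⊆ X with μ(X \ B) < ε and B ∩ g^k(B) = ∅. -/
open MeasureTheory Filter Set Topology ENNReal NNReal

noncomputable section

private lemma aux_emb_iterate {X : Type*} [MeasurableSpace X] {g : X → X}
    (h : MeasurableEmbedding g) (k : ℕ) : MeasurableEmbedding g^[k] := by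
  induction k with
  | zero => simpa using MeasurableEmbedding.id
  | succ n ih => rw [Function.iterate_succ]; exact ih.comp h

private lemma aux_eLpNorm_le {X : Type*} [MeasurableSpace X] (μ : Measure X) (p : ℝ≥0∞)
    (hp0 : p ≠ 0) (hp' : p ≠ ⊤) {f : X → ℝ} {S : Set X} (hS : MeasurableSet S) {C : ℝ}
    (hC : 0 ≤ C) (hb : ∀ x, ‖f x‖ ≤ C) (h0 : ∀ x ∉ S, f x = 0) :
    eLpNorm f p μ ≤ ENNReal.ofReal C * μ S ^ (1 / p.toReal) := by
  have hmono : ∀ x, ‖f x‖ ≤ ‖S.indicator (fun _ => C) x‖ := by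
    intro x
    by_cases hx : x ∈ S
    · rw [Set.indicator_of_mem hx, Real.norm_of_nonneg hC]; exact hb x
    · simp [Set.indicator_of_notMem hx, h0 x hx]
  calc eLpNorm f p μ ≤ eLpNorm (S.indicator fun _ => C) p μ := eLpNorm_mono hmono
    _ = ENNReal.ofReal C * μ S ^ (1 / p.toReal) := by
        rw [eLpNorm_indicator_const hS hp0 hp', Real.enorm_eq_ofReal hC]

private lemma aux_iterate_ae {X : Type*} [MeasurableSpace X] {μ : Measure X} {g : X → X}
    (hqmp : Measure.QuasiMeasurePreserving g μ μ)
    {p : ℝ≥0∞} [Fact (1 ≤ p)] (T : Lp ℝ p μ →L[ℝ] Lp ℝ p μ)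
    (hT : ∀ φ : Lp ℝ p μ, ⇑(T φ) =ᵐ[μ] (⇑φ ∘ g)) (k : ℕ) (φ : Lp ℝ p μ) :
    ⇑((⇑T)^[k] φ) =ᵐ[μ] (⇑φ ∘ g^[k]) := by
  induction k generalizing φ with
  | zero => simp
  | succ n ih =>
    rw [Function.iterate_succ_apply']
    refine (hT _).trans ?_
    refine (hqmp.ae_eq (ih φ)).trans ?_
    exact Filter.EventuallyEq.of_eq (by rw [Function.comp_assoc, ← Function.iterate_succ])

private lemma aux_cheb {X : Type*} [MeasurableSpace X] {μ : Measure X} {p : ℝ≥0∞}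
    (hp0 : p ≠ 0) (hp' : p ≠ ⊤)
    {f : X → ℝ} (hf : AEStronglyMeasurable f μ) {r ε : ℝ} (hε : 0 < ε)
    (hrε : (2:ℝ) ^ p.toReal * r ^ p.toReal ≤ ε)
    (hfr : eLpNorm f p μ < ENNReal.ofReal r) :
    μ {x | 1/2 ≤ ‖f x‖} < ENNReal.ofReal ε := by
  have hq : 0 < p.toReal := ENNReal.toReal_pos hp0 hp'
  have hsub : {x | 1/2 ≤ ‖f x‖} ⊆ {x | (ENNReal.ofReal (1/2)) ≤ (‖f x‖₊ : ℝ≥0∞)} := by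
    intro x hx
    simp only [mem_setOf_eq] at *
    rw [← ENNReal.ofReal_coe_nnreal, coe_nnnorm]
    exact ENNReal.ofReal_le_ofReal hx
  have h1 := meas_ge_le_mul_pow_eLpNorm_enorm μ hp0 hp' hf (ε := ENNReal.ofReal (1/2)) (by simp) (by simp)
  have hhalf : (ENNReal.ofReal (1/2))⁻¹ = (2 : ℝ≥0∞) := by
    rw [ENNReal.ofReal_div_of_pos (by norm_num), ENNReal.ofReal_one, ENNReal.ofReal_ofNat]
    simp
  have hr : 0 < r := ENNReal.ofReal_pos.mp (lt_of_le_of_lt (by simp) hfr)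
  have h2q0 : (2:ℝ≥0∞) ^ p.toReal ≠ 0 := (ENNReal.rpow_pos (by norm_num) (by norm_num)).ne'
  have h2qt : (2:ℝ≥0∞) ^ p.toReal ≠ ⊤ :=
    ENNReal.rpow_ne_top_of_nonneg hq.le (by norm_num)
  calc μ {x | 1/2 ≤ ‖f x‖}
      ≤ μ {x | (ENNReal.ofReal (1/2)) ≤ (‖f x‖₊ : ℝ≥0∞)} := measure_mono hsub
    _ ≤ (ENNReal.ofReal (1/2))⁻¹ ^ p.toReal * eLpNorm f p μ ^ p.toReal := h1
    _ < (ENNReal.ofReal (1/2))⁻¹ ^ p.toReal * (ENNReal.ofReal r) ^ p.toReal := by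
        rw [hhalf]
        exact ENNReal.mul_lt_mul_right h2q0 h2qt (ENNReal.rpow_lt_rpow hfr hq)
    _ ≤ ENNReal.ofReal ε := by
        rw [hhalf, ENNReal.ofReal_rpow_of_pos hr, ← ENNReal.ofReal_ofNat 2,
          ENNReal.ofReal_rpow_of_pos (by norm_num : (0:ℝ) < 2),
          ← ENNReal.ofReal_mul (by positivity)]
        exact ENNReal.ofReal_le_ofReal hrε

end

noncomputable section

/-- Transitivity characterization for composition operators on a finite measure space
(Theorem of Bayart–Darji–Pires). -/
theorem compositionOperator_transitive_iff
    {X : Type*} [MeasurableSpace X]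
    (μ : Measure X) [IsFiniteMeasure μ]
    (g : X → X) (hg_inj : Function.Injective g) (hg_meas : Measurable g)
    (hg_bimeas : ∀ B : Set X, MeasurableSet B → MeasurableSet (g '' B))
    (hstar : CondStar μ g)
    (p : ENNReal) [Fact (1 ≤ p)] (hp' : p ≠ ⊤)
    (T : Lp ℝ p μ →L[ℝ] Lp ℝ p μ)
    (hT : ∀ φ : Lp ℝ p μ, ⇑(T φ) =ᵐ[μ] (⇑φ ∘ g)) :
    TopTransitive ⇑T ↔
      ∀ ε : ℝ, 0 < ε → ∃ k : ℕ, 1 ≤ k ∧ ∃ B : Set X,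
        MeasurableSet B ∧ μ (univ \ B) < ENNReal.ofReal ε ∧ B ∩ g^[k] '' B = ∅ := by
  obtain ⟨c, hc, hcμ⟩ := hstar
  have hp0 : p ≠ 0 := by
    intro h
    exact absurd (h ▸ Fact.out : (1:ℝ≥0∞) ≤ 0) (by simp)
  have hq : 0 < p.toReal := ENNReal.toReal_pos hp0 hp'
  -- quasi measure preservation of g
  have hqmp : Measure.QuasiMeasurePreserving g μ μ := by
    refine ⟨hg_meas, Measure.AbsolutelyContinuous.mk fun s hs h0 => ?_⟩
    rw [Measure.map_apply hg_meas hs]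
    have := hcμ s hs
    rw [h0, nonpos_iff_eq_zero, mul_eq_zero] at this
    rcases this with h | h
    · exact absurd h (by simp [ENNReal.ofReal_eq_zero, not_le, hc])
    · exact h
  have hTk : ∀ (k : ℕ) (φ : Lp ℝ p μ), ⇑((⇑T)^[k] φ) =ᵐ[μ] (⇑φ ∘ g^[k]) :=
    aux_iterate_ae hqmp T hT
  constructor
  · -- forward direction
    intro htrans ε hε
    set q := p.toReal with hqdef
    set r : ℝ := ((ε/4) / 2 ^ q) ^ (1/q) with hrdef
    have hr : 0 < r := Real.rpow_pos_of_pos (by positivity) _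
    have hrq : (2:ℝ) ^ q * r ^ q ≤ ε / 4 := by
      rw [hrdef, ← Real.rpow_mul (by positivity), one_div_mul_cancel hq.ne',
        Real.rpow_one, mul_comm, div_mul_cancel₀ _ (by positivity : (2:ℝ) ^ q ≠ 0)]
    set oneLp : Lp ℝ p μ := (memLp_const (1:ℝ)).toLp (fun _ => (1:ℝ)) with h1def
    set negLp : Lp ℝ p μ := (memLp_const (-1:ℝ)).toLp (fun _ => (-1:ℝ)) with hmdef
    obtain ⟨k, hk1, y, ⟨φ, hφU, rfl⟩, hφV⟩ :=
      htrans (Metric.ball oneLp r) (Metric.ball negLp r) Metric.isOpen_ball Metric.isOpen_ball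
        ⟨oneLp, Metric.mem_ball_self hr⟩ ⟨negLp, Metric.mem_ball_self hr⟩
    set Gk := g^[k] with hGkdef
    set φk := (⇑T)^[k] φ with hφkdef
    have hφmeas : Measurable ⇑φ := (Lp.stronglyMeasurable φ).measurable
    have hφkmeas : Measurable ⇑φk := (Lp.stronglyMeasurable φk).measurable
    have hGkmeas : Measurable Gk := hg_meas.iterate k
    set A := {x | ‖⇑φ x - 1‖ < 1/2} with hAdef
    set D := {x | ‖⇑φk x + 1‖ < 1/2} with hDdef
    set N := {x | ⇑φk x ≠ (⇑φ ∘ Gk) x} with hNdef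
    have hA : MeasurableSet A :=
      measurableSet_lt ((hφmeas.sub measurable_const).norm) measurable_const
    have hD : MeasurableSet D :=
      measurableSet_lt ((hφkmeas.add measurable_const).norm) measurable_const
    have hN : MeasurableSet N :=
      ((Lp.stronglyMeasurable φk).measurableSet_eq_fun
        ((Lp.stronglyMeasurable φ).comp_measurable hGkmeas)).compl
    have hNnull : μ N = 0 := by
      have h := hTk k φ
      rw [Filter.EventuallyEq, ae_iff] at h
      exact h
    refine ⟨k, hk1, (A ∩ D) \ N, (hA.inter hD).diff hN, ?_, ?_⟩
    · -- measure estimate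
      have hAc : μ {x | 1/2 ≤ ‖⇑φ x - 1‖} < ENNReal.ofReal (ε/4) := by
        refine aux_cheb (f := fun x => ⇑φ x - 1) hp0 hp'
          ((Lp.aestronglyMeasurable φ).sub aestronglyMeasurable_const) (by positivity) hrq ?_
        have he : eLpNorm (fun x => ⇑φ x - 1) p μ = ENNReal.ofReal ‖φ - oneLp‖ := by
          rw [Lp.norm_def, ENNReal.ofReal_toReal (Lp.eLpNorm_lt_top _).ne]
          refine eLpNorm_congr_ae ?_
          filter_upwards [Lp.coeFn_sub φ oneLp, (memLp_const (1:ℝ)).coeFn_toLp] with x h1 h2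
          rw [h1, Pi.sub_apply, h2]
        rw [he]
        rw [Metric.mem_ball, dist_eq_norm] at hφU
        exact (ENNReal.ofReal_lt_ofReal_iff hr).mpr hφU
      have hDc : μ {x | 1/2 ≤ ‖⇑φk x + 1‖} < ENNReal.ofReal (ε/4) := by
        have hsm : AEStronglyMeasurable (fun x => ⇑φk x + 1) μ :=
          (Lp.aestronglyMeasurable φk).add aestronglyMeasurable_const
        refine aux_cheb (f := fun x => ⇑φk x + 1) hp0 hp' hsm (by positivity) hrq ?_
        have he : eLpNorm (fun x => ⇑φk x + 1) p μ = ENNReal.ofReal ‖φk - negLp‖ := by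
          rw [Lp.norm_def, ENNReal.ofReal_toReal (Lp.eLpNorm_lt_top _).ne]
          refine eLpNorm_congr_ae ?_
          filter_upwards [Lp.coeFn_sub φk negLp, (memLp_const (-1:ℝ)).coeFn_toLp] with x h1 h2
          rw [h1, Pi.sub_apply, h2, sub_neg_eq_add]
        rw [he]
        rw [Metric.mem_ball, dist_eq_norm] at hφV
        exact (ENNReal.ofReal_lt_ofReal_iff hr).mpr hφV
      have hsub2 : univ \ ((A ∩ D) \ N) ⊆ ({x | 1/2 ≤ ‖⇑φ x - 1‖} ∪ {x | 1/2 ≤ ‖⇑φk x + 1‖}) ∪ N := by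
        intro x hx
        by_cases h1 : x ∈ A
        · by_cases h2 : x ∈ D
          · refine Or.inr ?_
            by_contra hN'
            exact hx.2 ⟨⟨h1, h2⟩, hN'⟩
          · exact Or.inl (Or.inr (mem_setOf_eq ▸ not_lt.mp (fun hlt => h2 hlt)))
        · exact Or.inl (Or.inl (mem_setOf_eq ▸ not_lt.mp (fun hlt => h1 hlt)))
      calc μ (univ \ ((A ∩ D) \ N))
          ≤ μ (({x | 1/2 ≤ ‖⇑φ x - 1‖} ∪ {x | 1/2 ≤ ‖⇑φk x + 1‖}) ∪ N) := measure_mono hsub2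
        _ ≤ μ ({x | 1/2 ≤ ‖⇑φ x - 1‖} ∪ {x | 1/2 ≤ ‖⇑φk x + 1‖}) + μ N := measure_union_le _ _
        _ = μ ({x | 1/2 ≤ ‖⇑φ x - 1‖} ∪ {x | 1/2 ≤ ‖⇑φk x + 1‖}) := by rw [hNnull, add_zero]
        _ ≤ μ {x | 1/2 ≤ ‖⇑φ x - 1‖} + μ {x | 1/2 ≤ ‖⇑φk x + 1‖} := measure_union_le _ _
        _ < ENNReal.ofReal (ε/4) + ENNReal.ofReal (ε/4) := ENNReal.add_lt_add hAc hDc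
        _ = ENNReal.ofReal (ε/4 + ε/4) := (ENNReal.ofReal_add (by positivity) (by positivity)).symm
        _ ≤ ENNReal.ofReal ε := ENNReal.ofReal_le_ofReal (by linarith)
    · -- disjointness
      rw [Set.eq_empty_iff_forall_notMem]
      rintro y ⟨hyB, x, hxB, rfl⟩
      obtain ⟨⟨hxA, hxD⟩, hxN⟩ := hxB
      obtain ⟨⟨hyA, _⟩, _⟩ := hyB
      have h1 : ⇑φk x = ⇑φ (Gk x) := not_not.mp hxN
      simp only [hDdef, mem_setOf_eq, Real.norm_eq_abs] at hxD
      simp only [hAdef, mem_setOf_eq, Real.norm_eq_abs] at hyA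
      rw [abs_lt] at hxD hyA
      rw [h1] at hxD
      obtain ⟨hxD1, hxD2⟩ := hxD
      obtain ⟨hyA1, hyA2⟩ := hyA
      linarith
  · -- backward direction
    intro hcond U V hU hV ⟨φ₀, hφ₀⟩ ⟨ψ₀, hψ₀⟩
    obtain ⟨r₁, hr₁, hUball⟩ := Metric.isOpen_iff.mp hU φ₀ hφ₀
    obtain ⟨r₂, hr₂, hVball⟩ := Metric.isOpen_iff.mp hV ψ₀ hψ₀
    set r := min r₁ r₂ with hrdef
    have hr : 0 < r := lt_min hr₁ hr₂
    obtain ⟨s, hs⟩ := (Lp.simpleFunc.denseRange (E := ℝ) (μ := μ) (p := p) hp').exists_dist_lt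
      φ₀ (by positivity : 0 < r/4)
    obtain ⟨t, ht⟩ := (Lp.simpleFunc.denseRange (E := ℝ) (μ := μ) (p := p) hp').exists_dist_lt
      ψ₀ (by positivity : 0 < r/4)
    set sf := Lp.simpleFunc.toSimpleFunc s with hsfdef
    set tf := Lp.simpleFunc.toSimpleFunc t with htfdef
    have hsfe : ⇑sf =ᵐ[μ] ⇑(s : Lp ℝ p μ) := Lp.simpleFunc.toSimpleFunc_eq_toFun s
    have htfe : ⇑tf =ᵐ[μ] ⇑(t : Lp ℝ p μ) := Lp.simpleFunc.toSimpleFunc_eq_toFun t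
    obtain ⟨Ms, hMs⟩ := sf.exists_forall_norm_le
    obtain ⟨Mt, hMt⟩ := tf.exists_forall_norm_le
    set M := max (max Ms Mt) 0 with hMdef
    have hM0 : (0:ℝ) ≤ M := le_max_right _ _
    have hsfM : ∀ x, ‖sf x‖ ≤ M := fun x => (hMs x).trans ((le_max_left Ms Mt).trans (le_max_left _ _))
    have htfM : ∀ x, ‖tf x‖ ≤ M := fun x => (hMt x).trans ((le_max_right Ms Mt).trans (le_max_left _ _))
    set C := 2*M + 1 with hCdef
    have hC : (0:ℝ) < C := by positivity
    set ε' := (r/4 / C) ^ p.toReal with hε'def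
    have hε' : 0 < ε' := Real.rpow_pos_of_pos (by positivity) _
    obtain ⟨k, hk1, B, hB, hμB, hdisj⟩ := hcond ε' hε'
    set Gk := g^[k] with hGkdef
    have embk : MeasurableEmbedding Gk :=
      aux_emb_iterate ⟨hg_inj, hg_meas, fun b hb => hg_bimeas b hb⟩ k
    have hGkB : MeasurableSet (Gk '' B) := embk.measurableSet_image' hB
    obtain ⟨η, hη, hηeq⟩ := embk.exists_measurable_extend tf.measurable (fun _ => ⟨(0:ℝ)⟩)
    set ηM := fun y => max (-M) (min M (η y)) with hηMdef
    have hηMmeas : Measurable ηM := measurable_const.max (measurable_const.min hη)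
    have hηMb : ∀ y, ‖ηM y‖ ≤ M := by
      intro y
      rw [Real.norm_eq_abs, abs_le]
      exact ⟨le_max_left _ _, max_le (by linarith) (min_le_left _ _)⟩
    have hηMc : ∀ x, ηM (Gk x) = tf x := by
      intro x
      have h1 : η (Gk x) = tf x := congrFun hηeq x
      have h2 := htfM x
      rw [Real.norm_eq_abs, abs_le] at h2
      show max (-M) (min M (η (Gk x))) = tf x
      rw [h1, min_eq_right h2.2, max_eq_right h2.1]
    classical
    set ζ := B.piecewise ⇑sf ((Gk '' B).piecewise ηM (fun _ => (0:ℝ))) with hζdef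
    have hζmeas : Measurable ζ :=
      Measurable.piecewise hB sf.measurable (Measurable.piecewise hGkB hηMmeas measurable_const)
    have hζb : ∀ y, ‖ζ y‖ ≤ M := by
      intro y
      by_cases h1 : y ∈ B
      · rw [hζdef, Set.piecewise_eq_of_mem _ _ _ h1]; exact hsfM y
      · rw [hζdef, Set.piecewise_eq_of_notMem _ _ _ h1]
        by_cases h2 : y ∈ Gk '' B
        · rw [Set.piecewise_eq_of_mem _ _ _ h2]; exact hηMb y
        · rw [Set.piecewise_eq_of_notMem _ _ _ h2]; simpa using hM0
    have hζmem : MemLp ζ p μ :=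
      MemLp.of_bound hζmeas.aestronglyMeasurable M (Filter.Eventually.of_forall hζb)
    set ζLp := hζmem.toLp ζ with hζLpdef
    have hμBc : μ Bᶜ < ENNReal.ofReal ε' := by rwa [Set.compl_eq_univ_diff]
    have hεq : (ENNReal.ofReal ε') ^ (1/p.toReal) = ENNReal.ofReal (r/4 / C) := by
      rw [ENNReal.ofReal_rpow_of_pos hε', hε'def, ← Real.rpow_mul (by positivity),
        mul_one_div_cancel hq.ne', Real.rpow_one]
    have key : ∀ f : X → ℝ, (∀ x, ‖f x‖ ≤ C) → (∀ x ∈ B, f x = 0) →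
        eLpNorm f p μ ≤ ENNReal.ofReal (r/4) := by
      intro f hfb hf0
      calc eLpNorm f p μ ≤ ENNReal.ofReal C * μ Bᶜ ^ (1/p.toReal) :=
            aux_eLpNorm_le μ p hp0 hp' hB.compl hC.le hfb
              (fun x hx => hf0 x (Set.not_notMem.mp hx))
        _ ≤ ENNReal.ofReal C * (ENNReal.ofReal ε') ^ (1/p.toReal) :=
            mul_le_mul_right (ENNReal.rpow_le_rpow hμBc.le (by positivity)) _
        _ = ENNReal.ofReal (r/4) := by
            rw [hεq, ← ENNReal.ofReal_mul hC.le, mul_comm, div_mul_cancel₀ _ hC.ne']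
    have hζs : dist ζLp (s : Lp ℝ p μ) ≤ r/4 := by
      have hae : (⇑ζLp - ⇑(s : Lp ℝ p μ)) =ᵐ[μ] (fun x => ζ x - sf x) := by
        filter_upwards [hζmem.coeFn_toLp, hsfe] with x h1 h2
        simp only [Pi.sub_apply]
        rw [h1, ← h2]
      rw [Lp.dist_def, eLpNorm_congr_ae hae]
      refine ENNReal.toReal_le_of_le_ofReal (by positivity) (key _ ?_ ?_)
      · intro x
        calc ‖ζ x - sf x‖ ≤ ‖ζ x‖ + ‖sf x‖ := norm_sub_le _ _
          _ ≤ M + M := add_le_add (hζb x) (hsfM x)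
          _ ≤ C := by rw [hCdef]; linarith
      · intro x hx
        rw [hζdef, Set.piecewise_eq_of_mem _ _ _ hx, sub_self]
    have hζU : ζLp ∈ U := by
      apply hUball
      rw [Metric.mem_ball]
      calc dist ζLp φ₀ ≤ dist ζLp (s : Lp ℝ p μ) + dist (s : Lp ℝ p μ) φ₀ := dist_triangle _ _ _
        _ ≤ r/4 + r/4 := add_le_add hζs (by rw [dist_comm]; exact hs.le)
        _ < r₁ := by
            have h := min_le_left r₁ r₂
            rw [hrdef] at hr
            linarith
    have hdisj' : ∀ x ∈ B, Gk x ∉ B := fun x hx hGx =>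
      Set.eq_empty_iff_forall_notMem.mp hdisj (Gk x) ⟨hGx, x, hx, rfl⟩
    have hTζt : dist ((⇑T)^[k] ζLp) (t : Lp ℝ p μ) ≤ r/4 := by
      have hae : (⇑((⇑T)^[k] ζLp) - ⇑(t : Lp ℝ p μ)) =ᵐ[μ] (fun x => ζ (Gk x) - tf x) := by
        have h2 : ⇑ζLp ∘ Gk =ᵐ[μ] ζ ∘ Gk := (hqmp.iterate k).ae_eq hζmem.coeFn_toLp
        filter_upwards [hTk k ζLp, h2, htfe] with x e1 e2 e3
        simp only [Pi.sub_apply]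
        rw [e1]
        show (⇑ζLp ∘ Gk) x - ⇑(t : Lp ℝ p μ) x = ζ (Gk x) - tf x
        rw [e2, ← e3]
        rfl
      rw [Lp.dist_def, eLpNorm_congr_ae hae]
      refine ENNReal.toReal_le_of_le_ofReal (by positivity) (key _ ?_ ?_)
      · intro x
        calc ‖ζ (Gk x) - tf x‖ ≤ ‖ζ (Gk x)‖ + ‖tf x‖ := norm_sub_le _ _
          _ ≤ M + M := add_le_add (hζb _) (htfM x)
          _ ≤ C := by rw [hCdef]; linarith
      · intro x hx
        have h1 : Gk x ∈ Gk '' B := ⟨x, hx, rfl⟩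
        rw [hζdef, Set.piecewise_eq_of_notMem _ _ _ (hdisj' x hx),
          Set.piecewise_eq_of_mem _ _ _ h1, hηMc x, sub_self]
    have hTζV : (⇑T)^[k] ζLp ∈ V := by
      apply hVball
      rw [Metric.mem_ball]
      calc dist ((⇑T)^[k] ζLp) ψ₀
          ≤ dist ((⇑T)^[k] ζLp) (t : Lp ℝ p μ) + dist (t : Lp ℝ p μ) ψ₀ := dist_triangle _ _ _
        _ ≤ r/4 + r/4 := add_le_add hTζt (by rw [dist_comm]; exact ht.le)
        _ < r₂ := by
            have h := min_le_right r₁ r₂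
            rw [hrdef] at hr
            linarith
    exact ⟨k, hk1, (⇑T)^[k] ζLp, ⟨ζLp, hζU, rfl⟩, hTζV⟩

end
end

section
/- The family {μ_i} satisfies Condition (*) for the odometer f if and only if Condition (♦) holds, i.e., if and only if inf{ λ_l(j) · ∏_{i=0}^{l−1} λ_i(0) : l ≥ 1, j ∈ A_l } > 0. -/
open MeasureTheory Filter Set Topology ENNReal NNReal

noncomputable section

/-- `λ_i(j) = μ_i(j) / μ_i(j-1)`, where `j - 1` is interpreted cyclically in `A_i`. -/
def lamCyc (α : ℕ → ℕ) (w : ∀ i, Fin (α i) → NNReal) (i : ℕ) (j : Fin (α i)) : NNReal :=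
  w i j / w i ⟨((j : ℕ) + (α i - 1)) % α i, Nat.mod_lt _ j.pos⟩

/-- `λ_i(0) = μ_i(0) / μ_i(α_i - 1)`. -/
def lamZero (α : ℕ → ℕ) (hα : ∀ i, 0 < α i) (w : ∀ i, Fin (α i) → NNReal) (i : ℕ) : NNReal :=
  w i ⟨0, hα i⟩ / w i ⟨α i - 1, Nat.sub_lt (hα i) one_pos⟩

/-- Condition (♦): `inf { λ_l(j) · ∏_{i<l} λ_i(0) : l ≥ 1, j ∈ A_l } > 0`. -/
def CondDiamond (α : ℕ → ℕ) (hα : ∀ i, 0 < α i) (w : ∀ i, Fin (α i) → NNReal) : Prop :=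
  ∃ c : NNReal, 0 < c ∧ ∀ l : ℕ, 1 ≤ l → ∀ j : Fin (α l),
    c ≤ lamCyc α w l j * ∏ i ∈ Finset.range l, lamZero α hα w i

namespace CSP

variable {α : ℕ → ℕ}

def cylP (α : ℕ → ℕ) (n : ℕ) (x : ∀ i, Fin (α i)) : Set (∀ i, Fin (α i)) :=
  {y | ∀ i, i < n → y i = x i}

lemma measurableSet_cylP (n : ℕ) (x : ∀ i, Fin (α i)) : MeasurableSet (cylP α n x) := by
  have h : cylP α n x = ⋂ (i : ℕ) (_ : i < n), (fun y : ∀ i, Fin (α i) => y i) ⁻¹' {x i} := by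
    ext y; simp [cylP]
  rw [h]
  exact MeasurableSet.iInter fun i => MeasurableSet.iInter fun _ =>
    (measurable_pi_apply i) (measurableSet_singleton _)

lemma cylP_congr {n : ℕ} {x y : ∀ i, Fin (α i)} (h : ∀ i, i < n → x i = y i) :
    cylP α n x = cylP α n y := by
  ext u
  constructor <;> intro hu i hi
  · rw [hu i hi]; exact h i hi
  · rw [hu i hi]; exact (h i hi).symm

lemma meas_cylP {w : ∀ i, Fin (α i) → NNReal} {μ : Measure (∀ i, Fin (α i))}
    (hμ : IsProductMeasure α w μ) (n : ℕ) (x : ∀ i, Fin (α i)) :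
    μ (cylP α n x) = ↑(∏ i ∈ Finset.range n, w i (x i)) := by
  have h1 : cylP α n x = {y | ∀ i : Fin n, y i.1 = (fun i : Fin n => x i.1) i} := by
    ext y
    constructor
    · intro hy i; exact hy i.1 i.2
    · intro hy i hi; exact hy ⟨i, hi⟩
  rw [h1, hμ n (fun i => x i.1), ENNReal.coe_finset_prod]
  exact Fin.prod_univ_eq_prod_range (fun i => (w i (x i) : ℝ≥0∞)) n

lemma meas_cylP_ne_zero {w : ∀ i, Fin (α i) → NNReal} {μ : Measure (∀ i, Fin (α i))}
    (hμ : IsProductMeasure α w μ) (hw_pos : ∀ i j, 0 < w i j) (n : ℕ) (x : ∀ i, Fin (α i)) :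
    μ (cylP α n x) ≠ 0 := by
  rw [meas_cylP hμ]
  simp only [ne_eq, ENNReal.coe_eq_zero]
  exact Finset.prod_ne_zero_iff.2 fun i _ => (hw_pos i (x i)).ne'

lemma meas_cylP_ne_top {w : ∀ i, Fin (α i) → NNReal} {μ : Measure (∀ i, Fin (α i))}
    (hμ : IsProductMeasure α w μ) (n : ℕ) (x : ∀ i, Fin (α i)) :
    μ (cylP α n x) ≠ ⊤ := by
  rw [meas_cylP hμ]; exact ENNReal.coe_ne_top

def predMap (α : ℕ → ℕ) (x : ∀ i, Fin (α i)) : ∀ i, Fin (α i) :=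
  fun i => if ∀ j < i, (x j : ℕ) = 0
    then ⟨((x i : ℕ) + (α i - 1)) % α i, Nat.mod_lt _ (x i).pos⟩
    else x i

lemma predMap_pos {x : ∀ i, Fin (α i)} {i : ℕ} (h : ∀ j < i, (x j : ℕ) = 0) :
    (predMap α x i : ℕ) = ((x i : ℕ) + (α i - 1)) % α i := by
  simp only [predMap]; rw [if_pos h]

lemma predMap_neg {x : ∀ i, Fin (α i)} {i : ℕ} (h : ¬ ∀ j < i, (x j : ℕ) = 0) :
    predMap α x i = x i := by
  simp only [predMap]; rw [if_neg h]

lemma odometer_pos {y : ∀ i, Fin (α i)} {i : ℕ} (h : ∀ j < i, ((y j : ℕ) + 1 = α j)) :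
    (odometer α y i : ℕ) = ((y i : ℕ) + 1) % α i := by
  simp only [odometer]; rw [if_pos h]

lemma odometer_neg {y : ∀ i, Fin (α i)} {i : ℕ} (h : ¬ ∀ j < i, ((y j : ℕ) + 1 = α j)) :
    odometer α y i = y i := by
  simp only [odometer]; rw [if_neg h]

lemma carry_iff (x y : ∀ i, Fin (α i)) (i : ℕ)
    (K : ∀ j, j < i → y j = predMap α x j) :
    (∀ j < i, ((y j : ℕ) + 1 = α j)) ↔ (∀ j < i, (x j : ℕ) = 0) := by
  constructor
  · intro hc j
    induction j using Nat.strong_induction_on with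
    | _ j IH =>
      intro hj
      have hz : ∀ k < j, (x k : ℕ) = 0 := fun k hk => IH k hk (hk.trans hj)
      have hy : (y j : ℕ) = ((x j : ℕ) + (α j - 1)) % α j := by
        rw [K j hj]; exact predMap_pos hz
      have hcj := hc j hj
      by_contra hxj
      have h1 : 1 ≤ (x j : ℕ) := Nat.one_le_iff_ne_zero.2 hxj
      have h2 : (x j : ℕ) + (α j - 1) = α j + ((x j : ℕ) - 1) := by
        have := (x j).pos; omega
      rw [h2, Nat.add_mod_left, Nat.mod_eq_of_lt (by have := (x j).isLt; omega)] at hy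
      have := (x j).isLt; omega
  · intro hz j hj
    have hy : (y j : ℕ) = ((x j : ℕ) + (α j - 1)) % α j := by
      rw [K j hj]; exact predMap_pos fun k hk => hz k (hk.trans hj)
    rw [hz j hj, zero_add, Nat.mod_eq_of_lt (by have := (y j).pos; omega)] at hy
    have := (y j).pos; omega

lemma preimage_cylP (n : ℕ) (x : ∀ i, Fin (α i)) :
    odometer α ⁻¹' cylP α n x = cylP α n (predMap α x) := by
  ext y
  simp only [Set.mem_preimage, cylP, Set.mem_setOf_eq]
  constructor
  · intro H i
    induction i using Nat.strong_induction_on with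
    | _ i IH =>
      intro hin
      have K : ∀ j, j < i → y j = predMap α x j := fun j hj => IH j hj (hj.trans hin)
      have hci := carry_iff x y i K
      by_cases hz : ∀ j < i, (x j : ℕ) = 0
      · have hcar : ∀ j < i, ((y j : ℕ) + 1 = α j) := hci.2 hz
        have hval : ((y i : ℕ) + 1) % α i = (x i : ℕ) := by
          rw [← odometer_pos hcar, H i hin]
        apply Fin.ext
        rw [predMap_pos hz]
        rcases Nat.lt_or_ge ((y i : ℕ) + 1) (α i) with h1 | h1
        · have hb : (x i : ℕ) = (y i : ℕ) + 1 := by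
            rw [← hval]; exact Nat.mod_eq_of_lt h1
          have h2 : (x i : ℕ) + (α i - 1) = (y i : ℕ) + α i := by
            have := (y i).pos; omega
          rw [h2, Nat.add_mod_right, Nat.mod_eq_of_lt (y i).isLt]
        · have ha : (y i : ℕ) + 1 = α i := by have := (y i).isLt; omega
          have hb : (x i : ℕ) = 0 := by rw [← hval, ha, Nat.mod_self]
          rw [hb, zero_add, Nat.mod_eq_of_lt (by have := (y i).pos; omega)]
          omega
      · have hncar : ¬ ∀ j < i, ((y j : ℕ) + 1 = α j) := fun hcar => hz (hci.1 hcar)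
        rw [predMap_neg hz, ← H i hin, odometer_neg hncar]
  · intro H i hin
    have K : ∀ j, j < i → y j = predMap α x j := fun j hj => H j (hj.trans hin)
    have hci := carry_iff x y i K
    by_cases hz : ∀ j < i, (x j : ℕ) = 0
    · have hcar : ∀ j < i, ((y j : ℕ) + 1 = α j) := hci.2 hz
      apply Fin.ext
      rw [odometer_pos hcar]
      have hy : (y i : ℕ) = ((x i : ℕ) + (α i - 1)) % α i := by
        rw [H i hin]; exact predMap_pos hz
      rw [hy, Nat.mod_add_mod]
      have h2 : (x i : ℕ) + (α i - 1) + 1 = (x i : ℕ) + α i := by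
        have := (x i).pos; omega
      rw [h2, Nat.add_mod_right, Nat.mod_eq_of_lt (x i).isLt]
    · have hncar : ¬ ∀ j < i, ((y j : ℕ) + 1 = α j) := fun hcar => hz (hci.1 hcar)
      rw [odometer_neg hncar, H i hin]
      exact predMap_neg hz


def swapPt (α : ℕ → ℕ) (d : ∀ i, Fin (α i)) (p : Σ l, Fin (α l)) : ∀ i, Fin (α i) :=
  fun i => if h : i = p.1 then ⟨(p.2 : ℕ), by rw [h]; exact p.2.isLt⟩ else d i

lemma swapPt_self (d : ∀ i, Fin (α i)) (p : Σ l, Fin (α l)) :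
    (swapPt α d p p.1 : ℕ) = (p.2 : ℕ) := by simp [swapPt]

lemma swapPt_ne (d : ∀ i, Fin (α i)) (p : Σ l, Fin (α l)) {i : ℕ} (h : i ≠ p.1) :
    swapPt α d p i = d i := dif_neg h

/-- Decomposition of a cylinder around the point `d` by first coordinate different from `d`. -/
lemma meas_partition {μ : Measure (∀ i, Fin (α i))} (d : ∀ i, Fin (α i))
    {B : Set (∀ i, Fin (α i))} (hB : MeasurableSet B) (n : ℕ) :
    μ (B ∩ cylP α n d) = μ (B ∩ {d}) + ∑' p : Σ l, Fin (α l),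
      (if ((p.2 : ℕ) ≠ (d p.1 : ℕ) ∧ n ≤ p.1)
       then μ (B ∩ cylP α (p.1 + 1) (swapPt α d p)) else 0) := by
  classical
  set T : (Σ l, Fin (α l)) → Set (∀ i, Fin (α i)) := fun p =>
    if ((p.2 : ℕ) ≠ (d p.1 : ℕ) ∧ n ≤ p.1) then cylP α (p.1 + 1) (swapPt α d p) else ∅ with hT
  have hTm : ∀ p, MeasurableSet (T p) := by
    intro p; rw [hT]; dsimp only; split_ifs
    · exact measurableSet_cylP _ _
    · exact MeasurableSet.empty
  have hTd : ∀ p u, u ∈ T p → ((u p.1 : ℕ) = (p.2 : ℕ) ∧ (p.2 : ℕ) ≠ (d p.1 : ℕ) ∧ n ≤ p.1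
      ∧ ∀ i, i < p.1 → u i = d i) := by
    intro p u hu
    rw [hT] at hu; dsimp only at hu
    split_ifs at hu with hc
    · refine ⟨?_, hc.1, hc.2, ?_⟩
      · rw [hu p.1 (Nat.lt_succ_self _)]; exact swapPt_self d p
      · intro i hi
        rw [hu i (hi.trans (Nat.lt_succ_self _)), swapPt_ne d p (Nat.ne_of_lt hi)]
    · exact absurd hu (Set.notMem_empty u)
  have hcov : cylP α n d = {d} ∪ ⋃ p, T p := by
    ext u
    constructor
    · intro hu
      by_cases he : u = d
      · exact Or.inl he
      · have hex : ∃ i, u i ≠ d i := by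
          by_contra h
          push_neg at h
          exact he (funext h)
        refine Or.inr (Set.mem_iUnion.2 ⟨⟨Nat.find hex, u (Nat.find hex)⟩, ?_⟩)
        have hl : u (Nat.find hex) ≠ d (Nat.find hex) := Nat.find_spec hex
        have hmin : ∀ j, j < Nat.find hex → u j = d j := fun j hj =>
          not_not.1 (Nat.find_min hex hj)
        have hnl : n ≤ Nat.find hex := by
          by_contra h
          exact hl (hu _ (Nat.lt_of_not_le h))
        rw [hT]; dsimp only
        rw [if_pos ⟨fun h => hl (Fin.ext h), hnl⟩]
        intro i hi
        by_cases hil : i = Nat.find hex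
        · apply Fin.ext
          rw [hil]
          exact (swapPt_self d ⟨Nat.find hex, u (Nat.find hex)⟩).symm
        · rw [swapPt_ne d _ hil]
          exact hmin i (by omega)
    · rintro (hu | hu)
      · intro i hi; rw [hu]
      · obtain ⟨p, hp⟩ := Set.mem_iUnion.1 hu
        obtain ⟨_, _, hnp, hlow⟩ := hTd p u hp
        intro i hi
        exact hlow i (lt_of_lt_of_le hi hnp)
  have hdisj : Pairwise (Function.onFun Disjoint T) := by
    intro p q hpq
    rw [Function.onFun, Set.disjoint_left]
    intro u hup huq
    obtain ⟨hv1, hne1, _, hlow1⟩ := hTd p u hup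
    obtain ⟨hv2, hne2, _, hlow2⟩ := hTd q u huq
    rcases lt_trichotomy p.1 q.1 with h | h | h
    · exact hne1 (by rw [← hv1, hlow2 p.1 h])
    · apply hpq
      obtain ⟨pl, pv⟩ := p; obtain ⟨ql, qv⟩ := q
      dsimp at h hv1 hv2
      subst h
      have : pv = qv := Fin.ext (by rw [← hv1, hv2])
      rw [this]
    · exact hne2 (by rw [← hv2, hlow1 q.1 h])
  have hdS : Disjoint ({d} : Set (∀ i, Fin (α i))) (⋃ p, T p) := by
    rw [Set.disjoint_left]
    intro u hu huT
    obtain ⟨p, hp⟩ := Set.mem_iUnion.1 huT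
    obtain ⟨hv, hne, _, _⟩ := hTd p u hp
    rw [Set.mem_singleton_iff] at hu
    subst hu
    exact hne hv.symm
  have step1 : B ∩ cylP α n d = (B ∩ {d}) ∪ ⋃ p, (B ∩ T p) := by
    rw [hcov, Set.inter_union_distrib_left, Set.inter_iUnion]
  rw [step1, measure_union ?hd ?hm]
  case hd => exact (hdS.mono Set.inter_subset_right (Set.iUnion_subset fun p =>
      Set.inter_subset_right.trans (Set.subset_iUnion T p)))
  case hm => exact MeasurableSet.iUnion fun p => hB.inter (hTm p)
  congr 1
  rw [measure_iUnion ?_ (fun p => hB.inter (hTm p))]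
  · refine tsum_congr fun p => ?_
    rw [hT]; dsimp only
    split_ifs with hc
    · rfl
    · simp
  · intro p q hpq
    exact ((hdisj hpq).mono Set.inter_subset_right Set.inter_subset_right)

lemma antitone_cylP (d : ∀ i, Fin (α i)) : Antitone fun n => cylP α n d := by
  intro m n h u hu i hi
  exact hu i (lt_of_lt_of_le hi h)

lemma iInter_cylP (d : ∀ i, Fin (α i)) : (⋂ n, cylP α n d) = {d} := by
  ext u
  simp only [Set.mem_iInter, Set.mem_singleton_iff]
  constructor
  · intro h
    exact funext fun i => h (i + 1) i (Nat.lt_succ_self i)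
  · intro h; subst h; intro n i _; rfl

lemma tendsto_meas_cylP {w : ∀ i, Fin (α i) → NNReal} {μ : Measure (∀ i, Fin (α i))}
    (hμ : IsProductMeasure α w μ) (d : ∀ i, Fin (α i)) :
    Tendsto (fun n => μ (cylP α n d)) atTop (𝓝 (μ {d})) := by
  have h := tendsto_measure_iInter_atTop (μ := μ) (s := fun n => cylP α n d)
    (fun n => (measurableSet_cylP n d).nullMeasurableSet) (antitone_cylP d)
    ⟨0, meas_cylP_ne_top hμ 0 d⟩
  rw [iInter_cylP] at h
  exact h

def CC (α : ℕ → ℕ) : Set (Set (∀ i, Fin (α i))) := {S | ∃ n x, S = cylP α n x}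

lemma isPiSystem_CC : IsPiSystem (CC α) := by
  have aux : ∀ (n m : ℕ) (x y : ∀ i, Fin (α i)), n ≤ m →
      (cylP α n x ∩ cylP α m y).Nonempty → cylP α n x ∩ cylP α m y = cylP α m y := by
    intro n m x y hnm ⟨u, hu1, hu2⟩
    ext v
    constructor
    · exact fun hv => hv.2
    · intro hv
      refine ⟨fun i hi => ?_, hv⟩
      rw [hv i (lt_of_lt_of_le hi hnm), ← hu2 i (lt_of_lt_of_le hi hnm), hu1 i hi]
  rintro S ⟨n, x, rfl⟩ T ⟨m, y, rfl⟩ hne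
  rcases le_total n m with h | h
  · rw [aux n m x y h hne]; exact ⟨m, y, rfl⟩
  · rw [Set.inter_comm] at hne ⊢
    rw [aux m n y x h hne]; exact ⟨n, x, rfl⟩

lemma generateFrom_CC (hp : ∀ i, 0 < α i) :
    (inferInstance : MeasurableSpace (∀ i, Fin (α i))) = MeasurableSpace.generateFrom (CC α) := by
  refine le_antisymm ?_ (MeasurableSpace.generateFrom_le ?_)
  · show MeasurableSpace.pi ≤ _
    refine iSup_le fun i => ?_
    rintro s ⟨t, -, rfl⟩
    have hsing : ∀ a : Fin (α i), MeasurableSet[MeasurableSpace.generateFrom (CC α)]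
        ((fun y : ∀ i, Fin (α i) => y i) ⁻¹' {a}) := by
      intro a
      have he : (fun y : ∀ i, Fin (α i) => y i) ⁻¹' {a} =
        ⋃ (t : ∀ j : Fin (i + 1), Fin (α j.1)) (_ : t ⟨i, Nat.lt_succ_self i⟩ = a),
          cylP α (i + 1) (fun j => if h : j < i + 1 then t ⟨j, h⟩ else ⟨0, hp j⟩) := by
        ext u
        simp only [Set.mem_preimage, Set.mem_singleton_iff, Set.mem_iUnion]
        constructor
        · intro hu
          refine ⟨fun j => u j.1, hu, fun j hj => ?_⟩
          simp only
          rw [dif_pos hj]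
        · rintro ⟨t, ht, hmem⟩
          have h2 := hmem i (Nat.lt_succ_self i)
          simp only at h2
          rw [dif_pos (Nat.lt_succ_self i)] at h2
          rw [h2, ht]
      rw [he]
      exact MeasurableSet.iUnion fun t => MeasurableSet.iUnion fun _ =>
        MeasurableSpace.measurableSet_generateFrom ⟨i + 1, _, rfl⟩
    have ht : (fun y : ∀ i, Fin (α i) => y i) ⁻¹' t =
        ⋃ a : t, (fun y : ∀ i, Fin (α i) => y i) ⁻¹' {(a : Fin (α i))} := by
      ext u; simp
    rw [ht]
    exact MeasurableSet.iUnion fun a => hsing a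
  · rintro S ⟨n, x, rfl⟩
    exact measurableSet_cylP n x


lemma nn_core (a b : ℝ≥0) (P Q : ℕ → ℝ≥0) (l : ℕ) (S : ℝ≥0) (hb : b ≠ 0) (hQ : ∀ i, Q i ≠ 0) :
    (a / b * ∏ i ∈ Finset.range l, (P i / Q i)) * ((∏ i ∈ Finset.range l, Q i) * b * S)
      = ((∏ i ∈ Finset.range l, P i) * a) * S := by
  rw [Finset.prod_div_distrib]
  have hQQ : (∏ i ∈ Finset.range l, Q i) ≠ 0 := Finset.prod_ne_zero_iff.2 fun i _ => hQ i
  field_simp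

variable {w : ∀ i, Fin (α i) → NNReal} {μ : Measure (∀ i, Fin (α i))}

lemma lamCyc_pos (hw_pos : ∀ i j, 0 < w i j) (l : ℕ) (j : Fin (α l)) :
    0 < lamCyc α w l j := div_pos (hw_pos _ _) (hw_pos _ _)

lemma lamZero_pos (hp : ∀ i, 0 < α i) (hw_pos : ∀ i j, 0 < w i j) (i : ℕ) :
    0 < lamZero α hp w i := div_pos (hw_pos _ _) (hw_pos _ _)

lemma lamCyc_val_zero (hp : ∀ i, 0 < α i) {l : ℕ} {j : Fin (α l)} (hj : (j : ℕ) = 0) :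
    lamCyc α w l j = lamZero α hp w l := by
  unfold lamCyc lamZero
  congr 1
  · congr 1; exact Fin.ext hj
  · congr 1
    apply Fin.ext
    show ((j : ℕ) + (α l - 1)) % α l = α l - 1
    rw [hj, zero_add, Nat.mod_eq_of_lt (by have := hp l; omega)]

lemma predFin_val_eq_max_iff {l : ℕ} (k : Fin (α l)) :
    ((k : ℕ) + (α l - 1)) % α l = α l - 1 ↔ (k : ℕ) = 0 := by
  constructor
  · intro h
    by_contra hk
    have h1 : 1 ≤ (k : ℕ) := Nat.one_le_iff_ne_zero.2 hk
    have h2 : (k : ℕ) + (α l - 1) = α l + ((k : ℕ) - 1) := by have := k.pos; omega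
    rw [h2, Nat.add_mod_left, Nat.mod_eq_of_lt (by have := k.isLt; omega)] at h
    have := k.isLt; omega
  · intro h
    rw [h, zero_add, Nat.mod_eq_of_lt (by have := k.pos; omega)]

def predEquiv (l : ℕ) : Equiv (Fin (α l)) (Fin (α l)) where
  toFun k := ⟨((k : ℕ) + (α l - 1)) % α l, Nat.mod_lt _ k.pos⟩
  invFun k := ⟨((k : ℕ) + 1) % α l, Nat.mod_lt _ k.pos⟩
  left_inv k := by
    apply Fin.ext
    show (((k : ℕ) + (α l - 1)) % α l + 1) % α l = (k : ℕ)
    rw [Nat.mod_add_mod, show (k : ℕ) + (α l - 1) + 1 = (k : ℕ) + α l by have := k.pos; omega,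
      Nat.add_mod_right, Nat.mod_eq_of_lt k.isLt]
  right_inv k := by
    apply Fin.ext
    show (((k : ℕ) + 1) % α l + (α l - 1)) % α l = (k : ℕ)
    rw [Nat.mod_add_mod, show (k : ℕ) + 1 + (α l - 1) = (k : ℕ) + α l by have := k.pos; omega,
      Nat.add_mod_right, Nat.mod_eq_of_lt k.isLt]

/-- The key measure identity: the ratio between a cylinder and its odometer-shifted copy. -/
lemma mu_pred (hp : ∀ i, 0 < α i) (hμ : IsProductMeasure α w μ) (hw_pos : ∀ i j, 0 < w i j)
    {x : ∀ i, Fin (α i)} {l n : ℕ} (hln : l < n) (h0 : ∀ i < l, (x i : ℕ) = 0)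
    (hl : (x l : ℕ) ≠ 0 ∨ n = l + 1) :
    (↑(lamCyc α w l (x l) * ∏ i ∈ Finset.range l, lamZero α hp w i) : ℝ≥0∞)
      * μ (cylP α n (predMap α x)) = μ (cylP α n x) := by
  rw [meas_cylP hμ, meas_cylP hμ, ← ENNReal.coe_mul, ENNReal.coe_inj]
  have hsplit : ∀ v : ∀ i, Fin (α i), ∏ i ∈ Finset.range n, w i (v i)
      = ((∏ i ∈ Finset.range l, w i (v i)) * w l (v l)) * ∏ i ∈ Finset.Ico (l+1) n, w i (v i) := by
    intro v
    rw [← Finset.prod_range_succ]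
    rw [Finset.range_eq_Ico,
      ← Finset.prod_Ico_consecutive (fun i => w i (v i)) (Nat.zero_le (l+1)) hln,
      ← Finset.range_eq_Ico]
  rw [hsplit x, hsplit (predMap α x)]
  set P : ℕ → ℝ≥0 := fun i => w i ⟨0, hp i⟩ with hP
  set Q : ℕ → ℝ≥0 := fun i => w i ⟨α i - 1, Nat.sub_lt (hp i) one_pos⟩ with hQdef
  have htail : ∏ i ∈ Finset.Ico (l+1) n, w i (predMap α x i)
      = ∏ i ∈ Finset.Ico (l+1) n, w i (x i) := by
    rcases hl with hl | rfl
    · refine Finset.prod_congr rfl fun i hi => ?_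
      have hli : l < i := by have := (Finset.mem_Ico.1 hi).1; omega
      rw [predMap_neg (fun hc => hl (hc l hli))]
    · simp
  have hpredpre : ∀ i ∈ Finset.range l, w i (predMap α x i) = Q i := by
    intro i hi
    have hi' : i < l := Finset.mem_range.1 hi
    congr 1
    apply Fin.ext
    rw [predMap_pos (fun j hj => h0 j (hj.trans hi')), h0 i hi', zero_add,
      Nat.mod_eq_of_lt (by have := hp i; omega)]
  have hxpre : ∀ i ∈ Finset.range l, w i (x i) = P i := by
    intro i hi
    congr 1
    exact Fin.ext (h0 i (Finset.mem_range.1 hi))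
  have hpredl : w l (predMap α x l)
      = w l ⟨((x l : ℕ) + (α l - 1)) % α l, Nat.mod_lt _ (x l).pos⟩ := by
    congr 1
    exact Fin.ext (predMap_pos h0)
  rw [htail, Finset.prod_congr rfl hpredpre, Finset.prod_congr rfl hxpre, hpredl]
  have hlc : lamCyc α w l (x l)
      = w l (x l) / w l ⟨((x l : ℕ) + (α l - 1)) % α l, Nat.mod_lt _ (x l).pos⟩ := rfl
  have hlz : ∀ i ∈ Finset.range l, lamZero α hp w i = P i / Q i := fun i _ => rfl
  rw [hlc, Finset.prod_congr rfl hlz]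
  exact nn_core _ _ P Q l _ (hw_pos _ _).ne' (fun i => (hw_pos _ _).ne')

lemma mu_pred_coe_ne_zero (hp : ∀ i, 0 < α i) (hw_pos : ∀ i j, 0 < w i j) (l : ℕ)
    (j : Fin (α l)) :
    (↑(lamCyc α w l j * ∏ i ∈ Finset.range l, lamZero α hp w i) : ℝ≥0∞) ≠ 0 := by
  simp only [ne_eq, ENNReal.coe_eq_zero]
  exact (mul_pos (lamCyc_pos hw_pos l j)
    (Finset.prod_pos fun i _ => lamZero_pos hp hw_pos i)).ne'

def zP (α : ℕ → ℕ) (hp : ∀ i, 0 < α i) : ∀ i, Fin (α i) := fun i => ⟨0, hp i⟩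

def mxP (α : ℕ → ℕ) (hp : ∀ i, 0 < α i) : ∀ i, Fin (α i) :=
  fun i => ⟨α i - 1, Nat.sub_lt (hp i) one_pos⟩

@[simp] lemma zP_val (hp : ∀ i, 0 < α i) (i : ℕ) : (zP α hp i : ℕ) = 0 := rfl

@[simp] lemma mxP_val (hp : ∀ i, 0 < α i) (i : ℕ) : (mxP α hp i : ℕ) = α i - 1 := rfl

lemma L2 (hp : ∀ i, 0 < α i) (hμ : IsProductMeasure α w μ) (hw_pos : ∀ i j, 0 < w i j) (n : ℕ) :
    μ (cylP α n (zP α hp)) = (↑(∏ i ∈ Finset.range n, lamZero α hp w i) : ℝ≥0∞)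
      * μ (cylP α n (mxP α hp)) := by
  rw [meas_cylP hμ, meas_cylP hμ, ← ENNReal.coe_mul, ENNReal.coe_inj, ← Finset.prod_mul_distrib]
  refine Finset.prod_congr rfl fun i _ => ?_
  show w i (zP α hp i) = w i (zP α hp i) / w i (mxP α hp i) * w i (mxP α hp i)
  rw [div_mul_cancel₀ _ (hw_pos _ _).ne']


lemma odometer_measurable : Measurable (odometer α) := by
  rw [measurable_pi_iff]
  intro i
  have hfe : (fun x => odometer α x i) = fun x : ∀ i, Fin (α i) =>
      if ∀ j < i, ((x j : ℕ) + 1 = α j)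
      then (⟨((x i : ℕ) + 1) % α i, Nat.mod_lt _ (x i).pos⟩ : Fin (α i))
      else x i := rfl
  rw [hfe]
  refine Measurable.ite ?_ ?_ (measurable_pi_apply i)
  · have hset : {x : ∀ i, Fin (α i) | ∀ j < i, ((x j : ℕ) + 1 = α j)}
        = ⋂ (j : ℕ) (_ : j < i),
          (fun x : ∀ i, Fin (α i) => x j) ⁻¹' {v : Fin (α j) | (v : ℕ) + 1 = α j} := by
      ext x; simp
    rw [hset]
    exact MeasurableSet.iInter fun j => MeasurableSet.iInter fun _ =>
      (measurable_pi_apply j) (MeasurableSpace.measurableSet_top)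
  · exact Measurable.comp (f := fun x : ∀ i, Fin (α i) => x i)
      (g := fun v : Fin (α i) => (⟨((v : ℕ) + 1) % α i, Nat.mod_lt _ v.pos⟩ : Fin (α i)))
      (measurable_from_top) (measurable_pi_apply i)

section Main

lemma star_to_diamond (hμ : IsProductMeasure α w μ) (hw_pos : ∀ i j, 0 < w i j)
    (hp : ∀ i, 0 < α i) (c : ℝ) (hc : 0 < c)
    (hstar : ∀ B, MeasurableSet B → ENNReal.ofReal c * μ (odometer α ⁻¹' B) ≤ μ B) :
    ∀ l : ℕ, ∀ j : Fin (α l),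
      c.toNNReal ≤ lamCyc α w l j * ∏ i ∈ Finset.range l, lamZero α hp w i := by
  intro l j
  set x := swapPt α (zP α hp) ⟨l, j⟩ with hx
  have hx0 : ∀ i < l, (x i : ℕ) = 0 := by
    intro i hi
    rw [hx, swapPt_ne _ _ (Nat.ne_of_lt hi)]
    rfl
  have hxl : x l = j := Fin.ext (swapPt_self _ _)
  have key := hstar (cylP α (l + 1) x) (measurableSet_cylP _ _)
  rw [preimage_cylP] at key
  have hmp := mu_pred hp hμ hw_pos (Nat.lt_succ_self l) hx0 (Or.inr rfl)
  rw [← hmp] at key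
  have hne : μ (cylP α (l + 1) (predMap α x)) ≠ 0 := meas_cylP_ne_zero hμ hw_pos _ _
  have hnt : μ (cylP α (l + 1) (predMap α x)) ≠ ⊤ := meas_cylP_ne_top hμ _ _
  have h1 := (ENNReal.mul_le_mul_iff_left hne hnt).1 key
  have h2 : ENNReal.ofReal c = ((c.toNNReal : ℝ≥0) : ℝ≥0∞) := rfl
  rw [h2, ENNReal.coe_le_coe, hxl] at h1
  exact h1

lemma diamond_to_star (hμ : IsProductMeasure α w μ) (hw_pos : ∀ i j, 0 < w i j)
    (hp : ∀ i, 0 < α i) (cD : ℝ≥0) (hcD : 0 < cD)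
    (hD : ∀ l : ℕ, 1 ≤ l → ∀ j : Fin (α l),
      cD ≤ lamCyc α w l j * ∏ i ∈ Finset.range l, lamZero α hp w i) :
    ∃ c : ℝ, 0 < c ∧ ∀ B, MeasurableSet B →
      ENNReal.ofReal c * μ (odometer α ⁻¹' B) ≤ μ B := by
  classical
  haveI : IsFiniteMeasure μ := by
    constructor
    have h0 : (Set.univ : Set (∀ i, Fin (α i))) = cylP α 0 (zP α hp) := by
      ext u; simp [cylP]
    rw [h0, meas_cylP hμ]
    exact ENNReal.coe_lt_top
  haveI : Nonempty (Fin (α 0)) := ⟨⟨0, hp 0⟩⟩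
  set inf0 : ℝ≥0 := Finset.inf' Finset.univ Finset.univ_nonempty
      (fun j : Fin (α 0) => lamCyc α w 0 j) with hinf0
  set cs : ℝ≥0 := min (min cD 1) inf0 with hcs
  have hcs_pos : 0 < cs := by
    refine lt_min (lt_min hcD one_pos) ?_
    rw [hinf0, Finset.lt_inf'_iff]
    exact fun j _ => lamCyc_pos hw_pos 0 j
  have hcs_ne : (cs : ℝ≥0∞) ≠ 0 := by exact_mod_cast hcs_pos.ne'
  have hmain : ∀ p : Σ l, Fin (α l),
      cs ≤ lamCyc α w p.1 p.2 * ∏ i ∈ Finset.range p.1, lamZero α hp w i := by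
    rintro ⟨l, j⟩
    cases l with
    | zero =>
      have h1 : inf0 ≤ lamCyc α w 0 j := Finset.inf'_le _ (Finset.mem_univ j)
      rw [Finset.prod_range_zero, mul_one]
      exact (min_le_right _ _).trans h1
    | succ m =>
      exact le_trans ((min_le_left _ _).trans (min_le_left _ _))
        (hD (m + 1) (Nat.succ_le_succ (Nat.zero_le m)) j)
  have hzero : ∀ n, cs ≤ ∏ i ∈ Finset.range n, lamZero α hp w i := by
    intro n
    cases n with
    | zero =>
      rw [Finset.prod_range_zero]
      exact (min_le_left _ _).trans (min_le_right _ _)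
    | succ m =>
      have h1 := hmain ⟨m, zP α hp m⟩
      rw [lamCyc_val_zero hp (zP_val hp m)] at h1
      calc cs ≤ lamZero α hp w m * ∏ i ∈ Finset.range m, lamZero α hp w i := h1
        _ = ∏ i ∈ Finset.range (m + 1), lamZero α hp w i := by
            rw [Finset.prod_range_succ]; ring
  have hcmp : ∀ n, (cs : ℝ≥0∞) * μ (cylP α n (mxP α hp)) ≤ μ (cylP α n (zP α hp)) := by
    intro n
    rw [L2 hp hμ hw_pos n]
    exact mul_le_mul_left (ENNReal.coe_le_coe.2 (hzero n)) _
  have hsing : (cs : ℝ≥0∞) * μ {mxP α hp} ≤ μ {zP α hp} := by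
    refine le_of_tendsto_of_tendsto'
      (ENNReal.Tendsto.const_mul (tendsto_meas_cylP hμ (mxP α hp)) (Or.inr ENNReal.coe_ne_top))
      (tendsto_meas_cylP hμ (zP α hp)) hcmp
  have hmx0 : μ {zP α hp} = 0 → μ {mxP α hp} = 0 := by
    intro h0
    have h1 := hsing
    rw [h0] at h1
    rcases mul_eq_zero.1 (le_zero_iff.1 h1) with h | h
    · exact absurd h hcs_ne
    · exact h
  have hmxz : μ {mxP α hp} ≤ (cs : ℝ≥0∞)⁻¹ * μ {zP α hp} := by
    rw [← one_mul (μ {mxP α hp}), ← ENNReal.inv_mul_cancel hcs_ne ENNReal.coe_ne_top, mul_assoc]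
    exact mul_le_mul_right hsing _
  set ρ : ℝ≥0∞ := μ {mxP α hp} / μ {zP α hp} with hρ
  have hρz : ρ * μ {zP α hp} = μ {mxP α hp} := by
    by_cases h0 : μ {zP α hp} = 0
    · rw [hρ, h0, hmx0 h0]; simp
    · rw [hρ, ENNReal.div_mul_cancel h0 (measure_ne_top μ _)]
  have hρle : ρ ≤ (cs : ℝ≥0∞)⁻¹ := by
    by_cases h0 : μ {zP α hp} = 0
    · rw [hρ, h0, hmx0 h0]
      simp
    · rw [hρ, ENNReal.div_le_iff h0 (measure_ne_top μ _)]
      exact hmxz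
  set G : (Σ l, Fin (α l)) → Set (∀ i, Fin (α i)) :=
    fun p => cylP α (p.1 + 1) (swapPt α (zP α hp) p) with hG
  set rr : (Σ l, Fin (α l)) → ℝ≥0∞ := fun p =>
    (↑(lamCyc α w p.1 p.2 * ∏ i ∈ Finset.range p.1, lamZero α hp w i) : ℝ≥0∞)⁻¹ with hrr
  set rrz : (Σ l, Fin (α l)) → ℝ≥0∞ := fun p => if (p.2 : ℕ) = 0 then 0 else rr p with hrrz
  set ν : Measure (∀ i, Fin (α i)) :=
    Measure.sum (fun p => rrz p • μ.restrict (G p)) + ρ • μ.restrict {zP α hp} with hν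
  have hνapp : ∀ B, MeasurableSet B →
      ν B = (∑' p, rrz p * μ (B ∩ G p)) + ρ * μ (B ∩ {zP α hp}) := by
    intro B hB
    rw [hν, Measure.add_apply, Measure.sum_apply _ hB, Measure.smul_apply,
      Measure.restrict_apply hB, smul_eq_mul]
    congr 1
    refine tsum_congr fun p => ?_
    rw [Measure.smul_apply, Measure.restrict_apply hB, smul_eq_mul]
  have hkey : ∀ p : Σ l, Fin (α l), (p.2 : ℕ) ≠ 0 →
      rr p * μ (G p) = μ (cylP α (p.1 + 1) (swapPt α (mxP α hp) ⟨p.1, predEquiv p.1 p.2⟩)) := by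
    intro p hp2
    have h0 : ∀ i < p.1, ((swapPt α (zP α hp) p) i : ℕ) = 0 := by
      intro i hi
      rw [swapPt_ne _ _ (Nat.ne_of_lt hi)]
      rfl
    have hml := mu_pred hp hμ hw_pos (Nat.lt_succ_self p.1) h0 (Or.inr rfl)
    have hxl : swapPt α (zP α hp) p p.1 = p.2 := Fin.ext (swapPt_self _ _)
    rw [hxl] at hml
    have hcyl : cylP α (p.1 + 1) (predMap α (swapPt α (zP α hp) p))
        = cylP α (p.1 + 1) (swapPt α (mxP α hp) ⟨p.1, predEquiv p.1 p.2⟩) := by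
      refine cylP_congr fun i hi => Fin.ext ?_
      rcases Nat.lt_or_ge i p.1 with hlt | hge
      · rw [predMap_pos (fun j hj => h0 j (hj.trans hlt)), h0 i hlt, zero_add,
          Nat.mod_eq_of_lt (by have := hp i; omega),
          swapPt_ne (mxP α hp) ⟨p.1, predEquiv p.1 p.2⟩ (Nat.ne_of_lt hlt), mxP_val]
      · have hie : i = p.1 := by omega
        rw [hie, predMap_pos h0, congrArg Fin.val hxl,
          swapPt_self (mxP α hp) ⟨p.1, predEquiv p.1 p.2⟩]
        rfl
    rw [hcyl] at hml
    rw [← hml, ← mul_assoc, hrr,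
      ENNReal.inv_mul_cancel (mu_pred_coe_ne_zero hp hw_pos _ _) ENNReal.coe_ne_top, one_mul]
  have hνeq : μ.map (odometer α) = ν := by
    refine Measure.ext_of_generateFrom_of_iUnion (CC α) (fun _ => Set.univ)
      (generateFrom_CC hp) isPiSystem_CC (Set.iUnion_const _)
      (fun _ => ⟨0, zP α hp, by ext u; simp [cylP]⟩) (fun _ => ?_) ?_
    · rw [Measure.map_apply odometer_measurable MeasurableSet.univ, Set.preimage_univ]
      exact measure_ne_top μ _
    · rintro S ⟨n, x, rfl⟩
      rw [Measure.map_apply odometer_measurable (measurableSet_cylP n x), preimage_cylP,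
        hνapp _ (measurableSet_cylP n x)]
      by_cases hex : ∃ i, (x i : ℕ) ≠ 0 ∧ i < n
      · obtain ⟨i0, hi0, hi0n⟩ := hex
        have hex' : ∃ i, (x i : ℕ) ≠ 0 := ⟨i0, hi0⟩
        have hxl : (x (Nat.find hex') : ℕ) ≠ 0 := Nat.find_spec hex'
        set l := Nat.find hex' with hldef
        have hmin : ∀ j < l, (x j : ℕ) = 0 := fun j hj => not_not.1 (Nat.find_min hex' hj)
        have hln : l < n := lt_of_le_of_lt (Nat.find_min' hex' hi0) hi0n
        have hzB : (cylP α n x ∩ {zP α hp} : Set _) = ∅ := by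
          ext u
          simp only [Set.mem_inter_iff, Set.mem_singleton_iff, Set.mem_empty_iff_false,
            iff_false, not_and]
          intro hu hu2
          subst hu2
          have h3 := hu l hln
          exact hxl (by rw [← h3]; rfl)
        rw [hzB, measure_empty, mul_zero, add_zero]
        rw [tsum_eq_single (⟨l, x l⟩ : Σ l, Fin (α l)) ?_]
        · have hsub : cylP α n x ∩ G ⟨l, x l⟩ = cylP α n x := by
            refine Set.inter_eq_self_of_subset_left fun u hu => ?_
            intro i hi
            have hi' : i < l + 1 := hi
            rcases Nat.lt_or_ge i l with hil | hil
            · rw [hu i (by omega), swapPt_ne _ _ (Nat.ne_of_lt hil)]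
              exact Fin.ext (hmin i hil)
            · have hie : i = l := by omega
              rw [hie, hu l hln]
              exact (Fin.ext (swapPt_self (zP α hp) ⟨l, x l⟩)).symm
          rw [hsub]
          rw [show rrz ⟨l, x l⟩ = rr ⟨l, x l⟩ from if_neg hxl]
          have hml := mu_pred hp hμ hw_pos hln hmin (Or.inl hxl)
          rw [← hml, ← mul_assoc, hrr,
            ENNReal.inv_mul_cancel (mu_pred_coe_ne_zero hp hw_pos _ _) ENNReal.coe_ne_top,
            one_mul]
        · intro p hne
          by_cases hp2 : (p.2 : ℕ) = 0
          · rw [show rrz p = 0 from if_pos hp2, zero_mul]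
          · have hempty : cylP α n x ∩ G p = ∅ := by
              ext u
              simp only [Set.mem_inter_iff, Set.mem_empty_iff_false, iff_false, not_and]
              intro hu1 hu2
              rcases lt_trichotomy p.1 l with hc | hc | hc
              · have h1 := hu1 p.1 (by omega)
                have h2 := hu2 p.1 (Nat.lt_succ_self _)
                apply hp2
                rw [← swapPt_self (zP α hp) p, ← h2, h1]
                exact hmin p.1 hc
              · apply hne
                obtain ⟨pl, pv⟩ := p
                dsimp only at hc hu2 hp2 ⊢
                subst hc
                have h1 := hu1 l hln
                have h2 := hu2 l (Nat.lt_succ_self _)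
                have hpv : pv = x l := by
                  apply Fin.ext
                  rw [← swapPt_self (zP α hp) ⟨l, pv⟩, ← h2, h1]
                rw [hpv]
              · have h1 := hu1 l hln
                have h2 := hu2 l (by omega)
                apply hxl
                rw [← h1, h2, swapPt_ne _ _ (Nat.ne_of_lt hc)]
                rfl
            rw [hempty, measure_empty, mul_zero]
      · have hall : ∀ i < n, (x i : ℕ) = 0 := by
          intro i hi
          by_contra h
          exact hex ⟨i, h, hi⟩
        have hcx : cylP α n x = cylP α n (zP α hp) :=
          cylP_congr fun i hi => Fin.ext (hall i hi)
        have hpredx : cylP α n (predMap α x) = cylP α n (mxP α hp) := by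
          refine cylP_congr fun i hi => Fin.ext ?_
          rw [predMap_pos (fun j hj => hall j (hj.trans hi)), hall i hi, zero_add,
            Nat.mod_eq_of_lt (by have := hp i; omega)]
          rfl
        rw [hpredx, hcx]
        have hzz : (cylP α n (zP α hp) ∩ {zP α hp} : Set _) = {zP α hp} :=
          Set.inter_eq_self_of_subset_right
            (Set.singleton_subset_iff.2 fun i hi => rfl)
        rw [hzz, hρz]
        have hterm : ∀ p : Σ l, Fin (α l), rrz p * μ (cylP α n (zP α hp) ∩ G p)
            = (fun q : Σ l, Fin (α l) =>
                if ((q.2 : ℕ) ≠ ((mxP α hp) q.1 : ℕ) ∧ n ≤ q.1)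
                then μ (cylP α (q.1 + 1) (swapPt α (mxP α hp) q)) else 0)
              ((Equiv.sigmaCongrRight fun l => predEquiv (α := α) l) p) := by
          intro p
          show rrz p * μ (cylP α n (zP α hp) ∩ G p)
            = if (((predEquiv p.1 p.2 : Fin (α p.1)) : ℕ) ≠ ((mxP α hp) p.1 : ℕ) ∧ n ≤ p.1)
              then μ (cylP α (p.1 + 1) (swapPt α (mxP α hp) ⟨p.1, predEquiv p.1 p.2⟩)) else 0
          by_cases hp2 : (p.2 : ℕ) = 0
          · rw [show rrz p = 0 from if_pos hp2, zero_mul, if_neg ?_]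
            intro hcon
            exact hcon.1 ((predFin_val_eq_max_iff p.2).2 hp2)
          · by_cases hn : n ≤ p.1
            · have hGsub : cylP α n (zP α hp) ∩ G p = G p := by
                refine Set.inter_eq_self_of_subset_right fun u hu => ?_
                intro i hi
                have hu' : u i = swapPt α (zP α hp) p i := hu i (by omega)
                rw [hu', swapPt_ne _ _ (by omega)]
              rw [hGsub, show rrz p = rr p from if_neg hp2, hkey p hp2,
                if_pos ⟨fun h => hp2 ((predFin_val_eq_max_iff p.2).1 h), hn⟩]
            · have hempty : cylP α n (zP α hp) ∩ G p = ∅ := by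
                ext u
                simp only [Set.mem_inter_iff, Set.mem_empty_iff_false, iff_false, not_and]
                intro hu1 hu2
                apply hp2
                rw [← swapPt_self (zP α hp) p, ← hu2 p.1 (Nat.lt_succ_self _),
                  hu1 p.1 (by omega)]
                rfl
              rw [hempty, measure_empty, mul_zero, if_neg fun hcon => hn hcon.2]
        have hsum : (∑' p : Σ l, Fin (α l), rrz p * μ (cylP α n (zP α hp) ∩ G p))
            = ∑' q : Σ l, Fin (α l),
                (if ((q.2 : ℕ) ≠ ((mxP α hp) q.1 : ℕ) ∧ n ≤ q.1)
                 then μ (cylP α (q.1 + 1) (swapPt α (mxP α hp) q)) else 0) :=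
          (tsum_congr hterm).trans
            (Equiv.tsum_eq (Equiv.sigmaCongrRight fun l => predEquiv (α := α) l)
              (fun q : Σ l, Fin (α l) =>
                if ((q.2 : ℕ) ≠ ((mxP α hp) q.1 : ℕ) ∧ n ≤ q.1)
                then μ (cylP α (q.1 + 1) (swapPt α (mxP α hp) q)) else 0))
        rw [hsum]
        have hpart := meas_partition (μ := μ) (mxP α hp) MeasurableSet.univ n
        simp only [Set.univ_inter] at hpart
        rw [hpart, add_comm]
  refine ⟨((cs : ℝ≥0) : ℝ), by exact_mod_cast hcs_pos, ?_⟩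
  intro B hB
  rw [show ENNReal.ofReal ((cs : ℝ≥0) : ℝ) = ((cs : ℝ≥0) : ℝ≥0∞) from ENNReal.ofReal_coe_nnreal]
  have hmapB : μ (odometer α ⁻¹' B) = ν B := by
    rw [← Measure.map_apply odometer_measurable hB, hνeq]
  rw [hmapB, hνapp B hB]
  have hpart := meas_partition (μ := μ) (zP α hp) hB 0
  have hcyl0 : cylP α 0 (zP α hp) = Set.univ := by ext u; simp [cylP]
  rw [hcyl0, Set.inter_univ] at hpart
  have hb1 : ∀ p : Σ l, Fin (α l), rrz p * μ (B ∩ G p) ≤ (cs : ℝ≥0∞)⁻¹ *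
      (if ((p.2 : ℕ) ≠ ((zP α hp) p.1 : ℕ) ∧ 0 ≤ p.1)
       then μ (B ∩ cylP α (p.1 + 1) (swapPt α (zP α hp) p)) else 0) := by
    intro p
    by_cases hp2 : (p.2 : ℕ) = 0
    · rw [show rrz p = 0 from if_pos hp2, zero_mul]
      exact zero_le
    · rw [show rrz p = rr p from if_neg hp2, if_pos ⟨hp2, Nat.zero_le _⟩]
      refine mul_le_mul_left ?_ _
      simp only [hrr]
      exact ENNReal.inv_le_inv.2 (by exact_mod_cast hmain p)
  have hbound : (∑' p, rrz p * μ (B ∩ G p)) + ρ * μ (B ∩ {zP α hp})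
      ≤ (cs : ℝ≥0∞)⁻¹ * μ B := by
    calc (∑' p, rrz p * μ (B ∩ G p)) + ρ * μ (B ∩ {zP α hp})
        ≤ (∑' p : Σ l, Fin (α l), (cs : ℝ≥0∞)⁻¹ *
            (if ((p.2 : ℕ) ≠ ((zP α hp) p.1 : ℕ) ∧ 0 ≤ p.1)
             then μ (B ∩ cylP α (p.1 + 1) (swapPt α (zP α hp) p)) else 0))
            + (cs : ℝ≥0∞)⁻¹ * μ (B ∩ {zP α hp}) :=
          add_le_add (ENNReal.tsum_le_tsum hb1) (mul_le_mul_left hρle _)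
      _ = (cs : ℝ≥0∞)⁻¹ * (μ (B ∩ {zP α hp}) + ∑' p : Σ l, Fin (α l),
            (if ((p.2 : ℕ) ≠ ((zP α hp) p.1 : ℕ) ∧ 0 ≤ p.1)
             then μ (B ∩ cylP α (p.1 + 1) (swapPt α (zP α hp) p)) else 0)) := by
          rw [ENNReal.tsum_mul_left, ← mul_add,
            add_comm (μ (B ∩ {zP α hp}))]
      _ = (cs : ℝ≥0∞)⁻¹ * μ B := by rw [← hpart]
  refine le_trans (mul_le_mul_right hbound _) ?_
  rw [← mul_assoc, ENNReal.mul_inv_cancel hcs_ne ENNReal.coe_ne_top, one_mul]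

end Main
end CSP

/-- Condition (*) for the odometer holds if and only if Condition (♦) holds. -/
theorem condStar_iff_condDiamond
    (α : ℕ → ℕ) (hα : ∀ i, 2 ≤ α i)
    (w : ∀ i, Fin (α i) → NNReal)
    (hw_pos : ∀ i j, 0 < w i j) (hw_sum : ∀ i, ∑ j, w i j = 1)
    (μ : Measure (∀ i, Fin (α i))) (hμ : IsProductMeasure α w μ) :
    CondStar μ (odometer α) ↔
      CondDiamond α (fun i => by have := hα i; omega) w := by
  have hp : ∀ i, 0 < α i := fun i => lt_of_lt_of_le two_pos (hα i)
  constructor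
  · rintro ⟨c, hc, hstar⟩
    exact ⟨c.toNNReal, Real.toNNReal_pos.2 hc,
      fun l _ j => CSP.star_to_diamond hμ hw_pos hp c hc hstar l j⟩
  · rintro ⟨cD, hcD, hD⟩
    exact CSP.diamond_to_star hμ hw_pos hp cD hcD fun l hl j => hD l hl j
end
end
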